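/- arXiv:2005.11320 — 6 statements merged into one kernel-verified Lean document; each statement's English description precedes it below -/
import Mathlib

section
/- Under a single bridge outage handled by proportional control, the branch flow change on every surviving line is a PTDF-weighted superposition over the participating buses: for every line l = (i,j) ∈ E, f̃_l − f_l = f_ℓ̂ · Σ_{k∈N} α_k D_{l,kĵ}; equivalently, the line outage distribution factor K_{lℓ̂} := (f̃_l − f_l)/f_ℓ̂ equals Σ_{k : α_k>0} α_k D_{l,kĵ}. -/
open Matrix MeasureTheory

variable {n m : ℕ}

/-- Incidence matrix of an oriented network with buses `Fin (n+1)` (bus `Fin.last n` is the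
reference bus) and oriented lines indexed by `Fin m` with endpoint maps `src`, `tgt`. -/
def incM (src tgt : Fin m → Fin (n+1)) : Matrix (Fin (n+1)) (Fin m) ℝ :=
  Matrix.of fun i l => if src l = i then 1 else if tgt l = i then -1 else 0

/-- The matrix `A` built from a Laplacian `L`: its top-left `n × n` block is the inverse of the
reduced Laplacian (obtained by deleting the last row and column) and all other entries are `0`. -/
noncomputable def AmatL (L : Matrix (Fin (n+1)) (Fin (n+1)) ℝ) : Matrix (Fin (n+1)) (Fin (n+1)) ℝ :=
  Matrix.of fun i j =>
    if h : i ≠ Fin.last n ∧ j ≠ Fin.last n then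
      (L.submatrix Fin.castSucc Fin.castSucc)⁻¹ (i.castPred h.1) (j.castPred h.2)
    else 0

/-- The matrix `A` of the network with susceptance vector `b`. -/
noncomputable def Amat (src tgt : Fin m → Fin (n+1)) (b : Fin m → ℝ) : Matrix (Fin (n+1)) (Fin (n+1)) ℝ :=
  AmatL (incM src tgt * Matrix.diagonal b * (incM src tgt)ᵀ)

/-- Power transfer distribution factor `D_{l, k ĵ}`. -/
noncomputable def ptdf (src tgt : Fin m → Fin (n+1)) (b : Fin m → ℝ) (l : Fin m) (k jh : Fin (n+1)) : ℝ :=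
  b l * (Amat src tgt b (src l) k + Amat src tgt b (tgt l) jh
       - Amat src tgt b (src l) jh - Amat src tgt b (tgt l) k)

/-- The underlying simple graph of the network. -/
def netGraph (src tgt : Fin m → Fin (n+1)) : SimpleGraph (Fin (n+1)) :=
  SimpleGraph.fromRel fun a c => ∃ l, src l = a ∧ tgt l = c

/-- There is a simple path in the network from `jh` to `k` that contains line `l`. -/
def PathThrough (src tgt : Fin m → Fin (n+1)) (jh k : Fin (n+1)) (l : Fin m) : Prop :=
  ∃ w : (netGraph src tgt).Walk jh k, w.IsPath ∧ s(src l, tgt l) ∈ w.edges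

/-- Lines `e₁` and `e₂` belong to the same block: they are equal or lie on a common simple cycle. -/
def sameBlock (src tgt : Fin m → Fin (n+1)) (e₁ e₂ : Fin m) : Prop :=
  e₁ = e₂ ∨ ∃ (v : Fin (n+1)) (c : (netGraph src tgt).Walk v v),
    c.IsCycle ∧ s(src e₁, tgt e₁) ∈ c.edges ∧ s(src e₂, tgt e₂) ∈ c.edges

/-- A cut vertex: a vertex whose removal disconnects the graph. -/
def IsCutVertex {V : Type*} (G : SimpleGraph V) (v : V) : Prop :=
  ¬ (G.induce {w : V | w ≠ v}).Connected

/-- The subgraph of the network with only the lines in `S`. -/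
def netGraphOn (src tgt : Fin m → Fin (n+1)) (S : Set (Fin m)) : SimpleGraph (Fin (n+1)) :=
  SimpleGraph.fromRel fun a c => ∃ l ∈ S, src l = a ∧ tgt l = c

def maskIn (F : Finset (Fin m)) (b : Fin m → ℝ) : Fin m → ℝ := fun l => if l ∈ F then b l else 0
def maskOut (F : Finset (Fin m)) (b : Fin m → ℝ) : Fin m → ℝ := fun l => if l ∈ F then 0 else b l

/-- Column submatrix `C_F` (columns outside `F` zeroed out). -/
def CFmat (src tgt : Fin m → Fin (n+1)) (F : Finset (Fin m)) : Matrix (Fin (n+1)) (Fin m) ℝ :=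
  Matrix.of fun i l => if l ∈ F then incM src tgt i l else 0

/-- Column submatrix `C_{−F}` (columns in `F` zeroed out). -/
def CmFmat (src tgt : Fin m → Fin (n+1)) (F : Finset (Fin m)) : Matrix (Fin (n+1)) (Fin m) ℝ :=
  Matrix.of fun i l => if l ∈ F then 0 else incM src tgt i l

/-- Diagonal susceptance matrix `B_F`. -/
def BFmat (b : Fin m → ℝ) (F : Finset (Fin m)) : Matrix (Fin m) (Fin m) ℝ :=
  Matrix.diagonal (maskIn F b)

/-- Diagonal susceptance matrix `B_{−F}`. -/
def BmFmat (b : Fin m → ℝ) (F : Finset (Fin m)) : Matrix (Fin m) (Fin m) ℝ :=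
  Matrix.diagonal (maskOut F b)

/-- The matrix `A_{−F}` of the post-contingency network `(N, E ∖ F)`. -/
noncomputable def AmFmat (src tgt : Fin m → Fin (n+1)) (b : Fin m → ℝ) (F : Finset (Fin m)) :
    Matrix (Fin (n+1)) (Fin (n+1)) ℝ :=
  AmatL (CmFmat src tgt F * BmFmat b F * (CmFmat src tgt F)ᵀ)

/-- The `k`-th standard unit vector of `ℝ^{n+1}`. -/
def evec (k : Fin (n+1)) : Fin (n+1) → ℝ := Pi.single k 1

lemma incM_transpose_mulVec (src tgt : Fin m → Fin (n+1)) (hsl : ∀ l, src l ≠ tgt l)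
    (x : Fin (n+1) → ℝ) (l : Fin m) :
    ((incM src tgt)ᵀ *ᵥ x) l = x (src l) - x (tgt l) := by
  have key : ∀ i, incM src tgt i l * x i
      = (if i = src l then x (src l) else 0) + (if i = tgt l then -x (tgt l) else 0) := by
    intro i
    simp only [incM, Matrix.of_apply]
    by_cases h1 : src l = i
    · subst h1
      simp [(hsl l).symm, hsl l]
    · by_cases h2 : tgt l = i
      · subst h2
        simp [h1, Ne.symm h1]
      · simp [h1, h2, Ne.symm h1, Ne.symm h2]
  simp only [Matrix.mulVec, dotProduct, Matrix.transpose_apply]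
  rw [Finset.sum_congr rfl fun i _ => key i, Finset.sum_add_distrib,
    Finset.sum_ite_eq' Finset.univ (src l) (fun i => x (src l)),
    Finset.sum_ite_eq' Finset.univ (tgt l) (fun i => -x (tgt l))]
  simp [sub_eq_add_neg]

lemma incM_col_sum (src tgt : Fin m → Fin (n+1)) (hsl : ∀ l, src l ≠ tgt l) (l : Fin m) :
    ∑ i, incM src tgt i l = 0 := by
  have := incM_transpose_mulVec src tgt hsl (fun _ => 1) l
  simpa [Matrix.mulVec, dotProduct] using this

lemma quadForm (src tgt : Fin m → Fin (n+1)) (hsl : ∀ l, src l ≠ tgt l)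
    (b : Fin m → ℝ) (x : Fin (n+1) → ℝ) :
    x ⬝ᵥ (incM src tgt * Matrix.diagonal b * (incM src tgt)ᵀ) *ᵥ x
      = ∑ l, b l * (x (src l) - x (tgt l))^2 := by
  rw [← Matrix.mulVec_mulVec, Matrix.dotProduct_mulVec, ← Matrix.mulVec_transpose,
    Matrix.transpose_mul, Matrix.diagonal_transpose, ← Matrix.mulVec_mulVec]
  simp only [dotProduct, Matrix.mulVec_diagonal, incM_transpose_mulVec src tgt hsl]
  exact Finset.sum_congr rfl fun l _ => by ring

lemma edge_eq_of_quad_zero (src tgt : Fin m → Fin (n+1)) (b : Fin m → ℝ) (hb : ∀ l, 0 < b l)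
    (x : Fin (n+1) → ℝ) (h0 : ∑ l, b l * (x (src l) - x (tgt l))^2 = 0) :
    ∀ l, x (src l) = x (tgt l) := by
  intro l
  have hterm := (Finset.sum_eq_zero_iff_of_nonneg
    (fun l _ => mul_nonneg (hb l).le (sq_nonneg _))).mp h0 l (Finset.mem_univ l)
  have h2 : (x (src l) - x (tgt l))^2 = 0 := by
    rcases mul_eq_zero.mp hterm with h | h
    · exact absurd h (hb l).ne'
    · exact h
  have := pow_eq_zero_iff (n := 2) (by norm_num) |>.mp h2
  linarith [sub_eq_zero.mp this]

lemma const_on_connected (src tgt : Fin m → Fin (n+1)) (x : Fin (n+1) → ℝ)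
    (hx : ∀ l, x (src l) = x (tgt l)) {u v : Fin (n+1)}
    (h : (netGraph src tgt).Reachable u v) : x u = x v := by
  obtain ⟨w⟩ := h
  induction w with
  | nil => rfl
  | cons hadj w ih =>
    rw [netGraph, SimpleGraph.fromRel_adj] at hadj
    rcases hadj.2 with ⟨l, hl1, hl2⟩ | ⟨l, hl1, hl2⟩
    · subst hl1; subst hl2; rw [hx l]; exact ih
    · subst hl1; subst hl2; rw [← hx l]; exact ih

lemma reduced_det_isUnit (src tgt : Fin m → Fin (n+1)) (hsl : ∀ l, src l ≠ tgt l)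
    (b : Fin m → ℝ) (hb : ∀ l, 0 < b l) (hconn : (netGraph src tgt).Connected) :
    IsUnit ((incM src tgt * Matrix.diagonal b * (incM src tgt)ᵀ).submatrix
      Fin.castSucc Fin.castSucc).det := by
  rw [isUnit_iff_ne_zero]
  intro hdet
  obtain ⟨v, hv0, hv⟩ := Matrix.exists_mulVec_eq_zero_iff.mpr hdet
  set x : Fin (n+1) → ℝ := Fin.snoc v 0 with hxdef
  have hxc : ∀ i : Fin n, x (Fin.castSucc i) = v i := fun i => by simp [hxdef]
  have hxl : x (Fin.last n) = 0 := by simp [hxdef]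
  have hquad : ∑ l, b l * (x (src l) - x (tgt l))^2 = 0 := by
    rw [← quadForm src tgt hsl b x]
    have heq : x ⬝ᵥ (incM src tgt * Matrix.diagonal b * (incM src tgt)ᵀ) *ᵥ x
        = v ⬝ᵥ ((incM src tgt * Matrix.diagonal b * (incM src tgt)ᵀ).submatrix
            Fin.castSucc Fin.castSucc) *ᵥ v := by
      simp [dotProduct, Matrix.mulVec, Fin.sum_univ_castSucc, hxc, hxl, Matrix.submatrix_apply]
    rw [heq, hv, dotProduct_zero]
  have hedge := edge_eq_of_quad_zero src tgt b hb x hquad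
  have hzero : ∀ i, x i = 0 := by
    intro i
    rw [const_on_connected src tgt x hedge (hconn.preconnected i (Fin.last n)), hxl]
  exact hv0 (funext fun i => by rw [Pi.zero_apply, ← hxc i, hzero])

lemma lap_col_sum (src tgt : Fin m → Fin (n+1)) (hsl : ∀ l, src l ≠ tgt l)
    (b : Fin m → ℝ) (j : Fin (n+1)) :
    ∑ i, (incM src tgt * Matrix.diagonal b * (incM src tgt)ᵀ) i j = 0 := by
  have h1 : (fun _ => (1:ℝ)) ᵥ* incM src tgt = 0 := by
    funext l
    simpa [Matrix.vecMul, dotProduct] using incM_col_sum src tgt hsl l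
  have h2 : (fun _ => (1:ℝ)) ᵥ* (incM src tgt * Matrix.diagonal b * (incM src tgt)ᵀ) = 0 := by
    rw [← Matrix.vecMul_vecMul, ← Matrix.vecMul_vecMul, h1]
    simp
  have := congrFun h2 j
  simpa [Matrix.vecMul, dotProduct] using this

lemma amatL_solves (L : Matrix (Fin (n+1)) (Fin (n+1)) ℝ)
    (hdet : IsUnit (L.submatrix Fin.castSucc Fin.castSucc).det)
    (hcol : ∀ j, ∑ i, L i j = 0)
    (q : Fin (n+1) → ℝ) (hq : ∑ i, q i = 0) :
    L *ᵥ (AmatL L *ᵥ q) = q := by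
  set Lr := L.submatrix Fin.castSucc Fin.castSucc with hLr
  set w := AmatL L *ᵥ q with hw
  have hwlast : w (Fin.last n) = 0 := by
    simp [hw, Matrix.mulVec, dotProduct, AmatL]
  have hwc : ∀ i : Fin n, w (Fin.castSucc i)
      = (Lr⁻¹ *ᵥ fun j => q (Fin.castSucc j)) i := by
    intro i
    simp only [hw, Matrix.mulVec, dotProduct, AmatL, Matrix.of_apply, Fin.sum_univ_castSucc]
    simp [Fin.castPred_castSucc, (Fin.castSucc_lt_last i).ne]
    exact Finset.sum_congr rfl fun x _ => by rfl
  have hrow : ∀ i : Fin n, (L *ᵥ w) (Fin.castSucc i) = q (Fin.castSucc i) := by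
    intro i
    have h1 : (L *ᵥ w) (Fin.castSucc i)
        = (Lr *ᵥ (Lr⁻¹ *ᵥ fun j => q (Fin.castSucc j))) i := by
      simp [Matrix.mulVec, dotProduct, Fin.sum_univ_castSucc, hwlast, hwc, hLr]
    rw [h1, Matrix.mulVec_mulVec, Matrix.mul_nonsing_inv _ hdet, Matrix.one_mulVec]
  funext i
  refine Fin.lastCases ?_ hrow i
  have hsum : ∑ i, (L *ᵥ w) i = 0 := by
    simp only [Matrix.mulVec, dotProduct]
    rw [Finset.sum_comm]
    simp [← Finset.sum_mul, hcol]
  rw [Fin.sum_univ_castSucc] at hsum hq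
  have hcongr : ∑ i : Fin n, (L *ᵥ w) (Fin.castSucc i)
      = ∑ i : Fin n, q (Fin.castSucc i) := Finset.sum_congr rfl fun i _ => hrow i
  linarith

/-- bridge outage LODF formula. Under a single bridge outage at bus `jhat`
handled by proportional control `α`, the branch flow change on every surviving line is the
PTDF-weighted superposition over participating buses:
`f̃_l − f_l = f_ℓ̂ ⬝ ∑_k α_k D_{l,kĵ}` for every line `l`. -/
theorem bridge_outage_flow_change
    {n m : ℕ} (src tgt : Fin m → Fin (n+1)) (hsl : ∀ l, src l ≠ tgt l)
    (b : Fin m → ℝ) (hb : ∀ l, 0 < b l)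
    (hconn : (netGraph src tgt).Connected)
    (α : Fin (n+1) → ℝ) (hα0 : ∀ k, 0 ≤ α k) (hα1 : ∑ k, α k = 1)
    (jhat : Fin (n+1)) (flhat : ℝ) (hflhat : flhat ≠ 0)
    (p θ θt : Fin (n+1) → ℝ) (f ft : Fin m → ℝ)
    (hpre1 : (incM src tgt).mulVec f = p + flhat • evec jhat)
    (hpre2 : f = (Matrix.diagonal b * (incM src tgt)ᵀ).mulVec θ)
    (hpost1 : (incM src tgt).mulVec ft = p + flhat • ∑ k, α k • evec k)
    (hpost2 : ft = (Matrix.diagonal b * (incM src tgt)ᵀ).mulVec θt) :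
    ∀ l, ft l - f l = flhat * ∑ k, α k * ptdf src tgt b l k jhat := by
  intro l
  set L := incM src tgt * Matrix.diagonal b * (incM src tgt)ᵀ with hL
  set q : Fin (n+1) → ℝ := fun k => flhat * (α k - if k = jhat then 1 else 0) with hq
  have hdiff : ft - f = (Matrix.diagonal b * (incM src tgt)ᵀ) *ᵥ (θt - θ) := by
    rw [hpost2, hpre2, Matrix.mulVec_sub]
  have hLx : L *ᵥ (θt - θ) = q := by
    have h1 : L *ᵥ (θt - θ) = incM src tgt *ᵥ (ft - f) := by
      rw [hdiff, Matrix.mulVec_mulVec, hL, Matrix.mul_assoc]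
    rw [h1, Matrix.mulVec_sub, hpost1, hpre1]
    funext i
    have e1 : (∑ k, α k • evec k) i = α i := by
      simp [evec, Finset.sum_apply, Pi.single_apply, mul_ite, Finset.sum_ite_eq]
    have e2 : evec jhat i = if i = jhat then 1 else 0 := by simp [evec, Pi.single_apply]
    simp only [Pi.add_apply, Pi.sub_apply, Pi.smul_apply, smul_eq_mul, e1, e2, hq]
    ring
  have hq0 : ∑ k, q k = 0 := by
    simp only [hq]
    have h2 : ∑ k, (α k - if k = jhat then 1 else 0) = 0 := by
      rw [Finset.sum_sub_distrib, hα1,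
        Finset.sum_ite_eq' Finset.univ jhat (fun _ => (1:ℝ))]
      simp
    rw [← Finset.mul_sum, h2, mul_zero]
  have hdet := reduced_det_isUnit src tgt hsl b hb hconn
  have hwq : L *ᵥ (AmatL L *ᵥ q) = q :=
    amatL_solves L hdet (fun j => lap_col_sum src tgt hsl b j) q hq0
  set wv := AmatL L *ᵥ q with hwv
  have hker : L *ᵥ ((θt - θ) - wv) = 0 := by
    rw [Matrix.mulVec_sub, hLx, hwv, hwq, sub_self]
  have hquad : ∑ l, b l * (((θt - θ) - wv) (src l) - ((θt - θ) - wv) (tgt l))^2 = 0 := by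
    rw [← quadForm src tgt hsl b _, hker, dotProduct_zero]
  have hedge := edge_eq_of_quad_zero src tgt b hb _ hquad l
  have hxy : (θt - θ) (src l) - (θt - θ) (tgt l) = wv (src l) - wv (tgt l) := by
    simp only [Pi.sub_apply] at hedge ⊢
    linarith
  have hlhs : ft l - f l = b l * ((θt - θ) (src l) - (θt - θ) (tgt l)) := by
    have h5 := congrFun hdiff l
    simp only [Pi.sub_apply] at h5
    rw [h5, ← Matrix.mulVec_mulVec, Matrix.mulVec_diagonal,
      incM_transpose_mulVec src tgt hsl]
  have hwv_entry : ∀ i, wv i = ∑ k, Amat src tgt b i k * q k := by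
    intro i
    simp [hwv, Amat, hL, Matrix.mulVec, dotProduct]
  rw [hlhs, hxy]
  simp only [ptdf]
  have h3 : wv (src l) - wv (tgt l)
      = flhat * (∑ k, α k * (Amat src tgt b (src l) k - Amat src tgt b (tgt l) k))
        - flhat * (Amat src tgt b (src l) jhat - Amat src tgt b (tgt l) jhat) := by
    rw [hwv_entry, hwv_entry, ← Finset.sum_sub_distrib]
    have h6 : ∀ k, Amat src tgt b (src l) k * q k - Amat src tgt b (tgt l) k * q k
        = flhat * (α k * (Amat src tgt b (src l) k - Amat src tgt b (tgt l) k))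
          - (if k = jhat then
              flhat * (Amat src tgt b (src l) k - Amat src tgt b (tgt l) k) else 0) := by
      intro k
      simp only [hq]
      by_cases h : k = jhat <;> simp [h] <;> ring
    rw [Finset.sum_congr rfl fun k _ => h6 k, Finset.sum_sub_distrib,
      Finset.sum_ite_eq' Finset.univ jhat
        (fun k => flhat * (Amat src tgt b (src l) k - Amat src tgt b (tgt l) k))]
    simp [Finset.mul_sum]
  have h4 : ∑ k, α k * (b l * (Amat src tgt b (src l) k + Amat src tgt b (tgt l) jhat
        - Amat src tgt b (src l) jhat - Amat src tgt b (tgt l) k))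
      = b l * (∑ k, α k * (Amat src tgt b (src l) k - Amat src tgt b (tgt l) k))
        + b l * (Amat src tgt b (tgt l) jhat - Amat src tgt b (src l) jhat) := by
    have h7 : ∀ k, α k * (b l * (Amat src tgt b (src l) k + Amat src tgt b (tgt l) jhat
          - Amat src tgt b (src l) jhat - Amat src tgt b (tgt l) k))
        = b l * (α k * (Amat src tgt b (src l) k - Amat src tgt b (tgt l) k))
          + b l * (Amat src tgt b (tgt l) jhat - Amat src tgt b (src l) jhat) * α k := by
      intro k; ring
    rw [Finset.sum_congr rfl fun k _ => h7 k, Finset.sum_add_distrib, ← Finset.mul_sum,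
      ← Finset.mul_sum, hα1, mul_one]
  rw [h3, h4]
  ring
end

section
/- Simple Path Criterion (bridge outage, 'only if' direction): fix a line l = (i,j) ∈ E, a bus ĵ ∈ N, and a proportional control α. If for every participating bus k (i.e., every k with α_k > 0) there is no simple path in G from ĵ to k that contains line l, then Σ_{k∈N} α_k D_{l,kĵ} = 0, and this holds for every choice of positive susceptances B_l > 0. -/
open Matrix MeasureTheory

variable {n m : ℕ}

section SPCAux
variable (src tgt : Fin m → Fin (n+1)) (b : Fin m → ℝ)

lemma incM_col (hsl : ∀ l, src l ≠ tgt l) (g : Fin (n+1) → ℝ) (e : Fin m) :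
    ∑ k, incM src tgt k e * g k = g (src e) - g (tgt e) := by
  have h : ∀ k, incM src tgt k e * g k
      = (if src e = k then g k else 0) + (if tgt e = k then -g k else 0) := by
    intro k
    simp only [incM, Matrix.of_apply]
    by_cases h1 : src e = k
    · have h2 : ¬ tgt e = k := fun h => hsl e (h1.trans h.symm)
      simp [h1, h2]
    · by_cases h2 : tgt e = k <;> simp [h1, h2]
  rw [Finset.sum_congr rfl fun k _ => h k, Finset.sum_add_distrib]
  simp only [Finset.sum_ite_eq, Finset.mem_univ, if_true]
  ring

lemma L_mulVec (hsl : ∀ l, src l ≠ tgt l) (u : Fin (n+1) → ℝ) (v : Fin (n+1)) :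
    ((incM src tgt * Matrix.diagonal b * (incM src tgt)ᵀ) *ᵥ u) v
      = ∑ e, incM src tgt v e * (b e * (u (src e) - u (tgt e))) := by
  have h1 : ∀ k, (incM src tgt * Matrix.diagonal b * (incM src tgt)ᵀ) v k
      = ∑ e, (incM src tgt v e * b e) * incM src tgt k e := by
    intro k
    rw [Matrix.mul_apply]
    refine Finset.sum_congr rfl fun e _ => ?_
    rw [Matrix.mul_diagonal, Matrix.transpose_apply]
  simp only [Matrix.mulVec, dotProduct]
  rw [Finset.sum_congr rfl fun k _ => by rw [h1 k, Finset.sum_mul]]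
  rw [Finset.sum_comm]
  refine Finset.sum_congr rfl fun e _ => ?_
  have : ∀ k, incM src tgt v e * b e * incM src tgt k e * u k
      = (incM src tgt v e * b e) * (incM src tgt k e * u k) := fun k => by ring
  rw [Finset.sum_congr rfl fun k _ => this k, ← Finset.mul_sum, incM_col src tgt hsl u e]
  ring

lemma netGraph_const (hconn : (netGraph src tgt).Connected) (g : Fin (n+1) → ℝ)
    (hg : ∀ e, g (src e) = g (tgt e)) (v w : Fin (n+1)) : g v = g w := by
  have adj : ∀ a c, (netGraph src tgt).Adj a c → g a = g c := by
    intro a c h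
    rw [netGraph, SimpleGraph.fromRel_adj] at h
    rcases h with ⟨_, ⟨e, h1, h2⟩ | ⟨e, h1, h2⟩⟩
    · rw [← h1, ← h2]; exact hg e
    · rw [← h1, ← h2]; exact (hg e).symm
  obtain ⟨p⟩ := hconn.preconnected v w
  induction p with
  | nil => rfl
  | cons h p ih => exact (adj _ _ h).trans ih

lemma Lbar_posdef (hsl : ∀ l, src l ≠ tgt l) (hconn : (netGraph src tgt).Connected)
    (hb : ∀ e, 0 < b e) :
    (((incM src tgt * Matrix.diagonal b * (incM src tgt)ᵀ)).submatrix
      Fin.castSucc Fin.castSucc).PosDef := by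
  set C := incM src tgt with hC
  set L := C * Matrix.diagonal b * Cᵀ with hL
  have hLsymm : Lᵀ = L := by
    rw [hL, Matrix.transpose_mul, Matrix.transpose_mul, Matrix.transpose_transpose,
      Matrix.diagonal_transpose, Matrix.mul_assoc]
  refine Matrix.posDef_iff_dotProduct_mulVec.mpr ⟨?_, ?_⟩
  · -- Hermitian
    show (L.submatrix Fin.castSucc Fin.castSucc)ᴴ = _
    ext i j
    simp only [Matrix.conjTranspose_apply, Matrix.submatrix_apply, star_trivial]
    conv_lhs => rw [← hLsymm]
    rfl
  · intro x hx
    -- extend x by 0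
    set xh : Fin (n+1) → ℝ := Fin.snoc x 0 with hxh
    have hxl : xh (Fin.last n) = 0 := Fin.snoc_last _ _
    have hxc : ∀ i : Fin n, xh i.castSucc = x i := fun i => Fin.snoc_castSucc _ _ _
    have hmv : ∀ i : Fin n, ((L.submatrix Fin.castSucc Fin.castSucc) *ᵥ x) i
        = (L *ᵥ xh) i.castSucc := by
      intro i
      simp only [Matrix.mulVec, dotProduct, Matrix.submatrix_apply]
      rw [Fin.sum_univ_castSucc (f := fun j => L i.castSucc j * xh j), hxl, mul_zero, add_zero]
      exact (Finset.sum_congr rfl fun j _ => by rw [hxc j]).symm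
    have hquad : star x ⬝ᵥ ((L.submatrix Fin.castSucc Fin.castSucc) *ᵥ x)
        = ∑ e, b e * (xh (src e) - xh (tgt e))^2 := by
      have h1 : star x ⬝ᵥ ((L.submatrix Fin.castSucc Fin.castSucc) *ᵥ x)
          = ∑ v, xh v * (L *ᵥ xh) v := by
        simp only [dotProduct, star_trivial, Pi.star_apply]
        rw [Fin.sum_univ_castSucc (f := fun v => xh v * (L *ᵥ xh) v), hxl, zero_mul, add_zero]
        exact Finset.sum_congr rfl fun i _ => by rw [hmv i, hxc i]
      rw [h1]
      have h2 : ∀ v, xh v * (L *ᵥ xh) v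
          = ∑ e, C v e * ((b e * (xh (src e) - xh (tgt e))) * xh v) := by
        intro v
        rw [hL, L_mulVec src tgt b hsl xh v, Finset.mul_sum]
        exact Finset.sum_congr rfl fun e _ => by ring
      rw [Finset.sum_congr rfl fun v _ => h2 v, Finset.sum_comm]
      refine Finset.sum_congr rfl fun e _ => ?_
      have h3 : ∑ v, C v e * (b e * (xh (src e) - xh (tgt e)) * xh v)
          = (b e * (xh (src e) - xh (tgt e))) * ∑ v, C v e * xh v := by
        rw [Finset.mul_sum]
        exact Finset.sum_congr rfl fun v _ => by ring
      rw [h3, incM_col src tgt hsl xh e]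
      ring
    rw [hquad]
    have hnn : ∀ e ∈ Finset.univ, 0 ≤ b e * (xh (src e) - xh (tgt e))^2 :=
      fun e _ => mul_nonneg (hb e).le (sq_nonneg _)
    rcases (Finset.sum_nonneg hnn).lt_or_eq with h | h
    · exact h
    · exfalso
      have hz : ∀ e, xh (src e) = xh (tgt e) := by
        intro e
        have := (Finset.sum_eq_zero_iff_of_nonneg hnn).mp h.symm e (Finset.mem_univ e)
        have h4 : (xh (src e) - xh (tgt e))^2 = 0 := by
          rcases mul_eq_zero.mp this with h' | h'
          · exact absurd h' (hb e).ne'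
          · exact h'
        have := pow_eq_zero_iff (n := 2) (by norm_num) |>.mp h4
        linarith [sub_eq_zero.mp this]
      apply hx
      funext i
      have := netGraph_const src tgt hconn xh hz i.castSucc (Fin.last n)
      rw [hxl] at this
      rw [← hxc i, this]; rfl

lemma L_A_mulVec (hsl : ∀ l, src l ≠ tgt l) (hconn : (netGraph src tgt).Connected)
    (hb : ∀ e, 0 < b e) (p : Fin (n+1) → ℝ) (hp : ∑ k, p k = 0) (v : Fin (n+1)) :
    ((incM src tgt * Matrix.diagonal b * (incM src tgt)ᵀ) *ᵥ (Amat src tgt b *ᵥ p)) v = p v := by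
  set C := incM src tgt with hC
  set L := C * Matrix.diagonal b * Cᵀ with hL
  set Lb := L.submatrix Fin.castSucc Fin.castSucc with hLb
  have hunit : IsUnit Lb.det := (Lbar_posdef src tgt b hsl hconn hb).det_pos.ne'.isUnit
  have hinv : Lb * Lb⁻¹ = 1 := Matrix.mul_nonsing_inv Lb hunit
  set u : Fin (n+1) → ℝ := Amat src tgt b *ᵥ p with hu
  -- A entries
  have hA : Amat src tgt b = AmatL L := rfl
  have hAlast : ∀ k, AmatL L (Fin.last n) k = 0 := by
    intro k
    simp [AmatL]
  have hAlast' : ∀ v, AmatL L v (Fin.last n) = 0 := by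
    intro v
    simp [AmatL]
  have hulast : u (Fin.last n) = 0 := by
    rw [hu, hA]
    simp only [Matrix.mulVec, dotProduct]
    exact Finset.sum_eq_zero fun k _ => by rw [hAlast k, zero_mul]
  have hucast : ∀ i : Fin n, u i.castSucc = (Lb⁻¹ *ᵥ (fun j => p j.castSucc)) i := by
    intro i
    rw [hu, hA]
    simp only [Matrix.mulVec, dotProduct]
    rw [Fin.sum_univ_castSucc (f := fun k => AmatL L i.castSucc k * p k)]
    rw [hAlast' i.castSucc, zero_mul, add_zero]
    refine Finset.sum_congr rfl fun j _ => ?_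
    congr 1
    have h1 : i.castSucc ≠ Fin.last n := (Fin.castSucc_lt_last i).ne
    have h2 : j.castSucc ≠ Fin.last n := (Fin.castSucc_lt_last j).ne
    simp [AmatL, h1, h2, Fin.castPred_castSucc, hLb]
  -- values at castSucc
  have hcast : ∀ i : Fin n, (L *ᵥ u) i.castSucc = p i.castSucc := by
    intro i
    have h1 : (L *ᵥ u) i.castSucc = ∑ j : Fin n, Lb i j * u j.castSucc := by
      simp only [Matrix.mulVec, dotProduct]
      rw [Fin.sum_univ_castSucc (f := fun k => L i.castSucc k * u k), hulast, mul_zero, add_zero]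
      rfl
    rw [h1]
    have h2 : ∑ j : Fin n, Lb i j * u j.castSucc
        = ((Lb * Lb⁻¹) *ᵥ (fun j => p j.castSucc)) i := by
      rw [← Matrix.mulVec_mulVec]
      simp only [Matrix.mulVec, dotProduct]
      refine Finset.sum_congr rfl fun j _ => by rw [hucast j]; rfl
    rw [h2, hinv]
    simp [Matrix.mulVec, dotProduct, Matrix.one_apply]
  -- total sum of L *ᵥ u is zero
  have hsum : ∑ w, (L *ᵥ u) w = 0 := by
    rw [Finset.sum_congr rfl fun w _ => L_mulVec src tgt b hsl u w, Finset.sum_comm]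
    refine Finset.sum_eq_zero fun e _ => ?_
    have := incM_col src tgt hsl (fun _ => (1:ℝ)) e
    have h0 : ∑ w, incM src tgt w e = 0 := by
      simpa using this
    rw [← Finset.sum_mul, h0, zero_mul]
  -- conclude
  refine Fin.lastCases ?_ (fun i => hcast i) v
  · have h1 := Fin.sum_univ_castSucc (f := fun w => (L *ᵥ u) w)
    rw [hsum] at h1
    have h2 := Fin.sum_univ_castSucc (f := fun k => p k)
    rw [hp] at h2
    have h3 : ∑ i : Fin n, (L *ᵥ u) i.castSucc = ∑ i : Fin n, p i.castSucc :=
      Finset.sum_congr rfl fun i _ => hcast i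
    linarith

lemma incM_src (e : Fin m) : incM src tgt (src e) e = 1 := by
  simp [incM]

lemma incM_tgt (hsl : ∀ l, src l ≠ tgt l) (e : Fin m) : incM src tgt (tgt e) e = -1 := by
  simp [incM, (hsl e).symm, hsl e]

lemma incM_ne (e : Fin m) (v : Fin (n+1)) (h1 : src e ≠ v) (h2 : tgt e ≠ v) :
    incM src tgt v e = 0 := by
  simp [incM, h1, h2]

lemma flow_step (hsl : ∀ l, src l ≠ tgt l) (hb : ∀ e, 0 < b e) (u p : Fin (n+1) → ℝ)
    (hdiv : ∀ v, ∑ e, incM src tgt v e * (b e * (u (src e) - u (tgt e))) = p v)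
    (v : Fin (n+1))
    (hin : ∃ e, incM src tgt v e * (b e * (u (src e) - u (tgt e))) < 0)
    (hp : 0 ≤ p v) :
    ∃ w', (netGraph src tgt).Adj v w' ∧ u w' < u v ∧
      ∃ e, incM src tgt w' e * (b e * (u (src e) - u (tgt e))) < 0 := by
  obtain ⟨e0, he0⟩ := hin
  -- there is an out edge
  have hout : ∃ e1, 0 < incM src tgt v e1 * (b e1 * (u (src e1) - u (tgt e1))) := by
    by_contra hc
    push_neg at hc
    have hlt : ∑ e, incM src tgt v e * (b e * (u (src e) - u (tgt e)))
        < ∑ _e : Fin m, (0:ℝ) :=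
      Finset.sum_lt_sum (fun e _ => hc e) ⟨e0, Finset.mem_univ e0, he0⟩
    rw [Finset.sum_const, smul_zero, hdiv v] at hlt
    linarith
  obtain ⟨e1, he1⟩ := hout
  have hCne : incM src tgt v e1 ≠ 0 := by
    intro h
    rw [h, zero_mul] at he1
    exact lt_irrefl _ he1
  by_cases hsv : src e1 = v
  · -- flow out along e1 from src; go to tgt e1
    refine ⟨tgt e1, ?_, ?_, ⟨e1, ?_⟩⟩
    · rw [netGraph, SimpleGraph.fromRel_adj]
      exact ⟨hsv ▸ (hsl e1), Or.inl ⟨e1, hsv, rfl⟩⟩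
    · have h1 : incM src tgt v e1 = 1 := by rw [← hsv]; exact incM_src src tgt e1
      rw [h1, one_mul] at he1
      have := (mul_pos_iff.mp he1)
      rcases this with ⟨_, h2⟩ | ⟨h2, _⟩
      · rw [← hsv]; linarith
      · exact absurd h2 (not_lt.mpr (hb e1).le)
    · have h1 : incM src tgt v e1 = 1 := by rw [← hsv]; exact incM_src src tgt e1
      rw [h1, one_mul] at he1
      rw [incM_tgt src tgt hsl e1]
      linarith
  · have htv : tgt e1 = v := by
      by_contra htv
      exact hCne (incM_ne src tgt e1 v hsv htv)
    refine ⟨src e1, ?_, ?_, ⟨e1, ?_⟩⟩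
    · rw [netGraph, SimpleGraph.fromRel_adj]
      exact ⟨htv ▸ (hsl e1).symm, Or.inr ⟨e1, rfl, htv⟩⟩
    · have h1 : incM src tgt v e1 = -1 := by rw [← htv]; exact incM_tgt src tgt hsl e1
      rw [h1, neg_one_mul, neg_pos] at he1
      have := mul_neg_iff.mp he1
      rcases this with ⟨_, h2⟩ | ⟨h2, _⟩
      · rw [← htv]; linarith
      · exact absurd h2 (not_lt.mpr (hb e1).le)
    · have h1 : incM src tgt v e1 = -1 := by rw [← htv]; exact incM_tgt src tgt hsl e1
      rw [h1, neg_one_mul, neg_pos] at he1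
      rw [incM_src src tgt e1]
      linarith

lemma flow_escape (hsl : ∀ l, src l ≠ tgt l) (hb : ∀ e, 0 < b e) (u p : Fin (n+1) → ℝ)
    (hdiv : ∀ v, ∑ e, incM src tgt v e * (b e * (u (src e) - u (tgt e))) = p v) :
    ∀ (N : ℕ) (v : Fin (n+1)),
      (Finset.univ.filter (fun x => u x < u v)).card ≤ N →
      (∃ e, incM src tgt v e * (b e * (u (src e) - u (tgt e))) < 0) →
      ∃ (z : Fin (n+1)) (w : (netGraph src tgt).Walk v z),
        p z < 0 ∧ List.IsChain (fun a c => u c < u a) w.support := by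
  intro N
  induction N with
  | zero =>
    intro v hcard hin
    by_cases hp : p v < 0
    · exact ⟨v, SimpleGraph.Walk.nil, hp, by simp⟩
    · exfalso
      obtain ⟨w', _, hw'u, _⟩ :=
        flow_step src tgt b hsl hb u p hdiv v hin (not_lt.mp hp)
      have : w' ∈ Finset.univ.filter (fun x => u x < u v) := by
        simp [hw'u]
      have := Finset.card_pos.mpr ⟨w', this⟩
      omega
  | succ N ih =>
    intro v hcard hin
    by_cases hp : p v < 0
    · exact ⟨v, SimpleGraph.Walk.nil, hp, by simp⟩
    · obtain ⟨w', hadj, hw'u, hin'⟩ :=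
        flow_step src tgt b hsl hb u p hdiv v hin (not_lt.mp hp)
      have hss : Finset.univ.filter (fun x => u x < u w')
          ⊂ Finset.univ.filter (fun x => u x < u v) := by
        refine Finset.ssubset_iff_of_subset ?_ |>.mpr ⟨w', by simp [hw'u], by simp⟩
        intro x hx
        simp only [Finset.mem_filter, Finset.mem_univ, true_and] at hx ⊢
        exact hx.trans hw'u
      have hcard' : (Finset.univ.filter (fun x => u x < u w')).card ≤ N := by
        have := Finset.card_lt_card hss
        omega
      obtain ⟨z, w, hz, hchain⟩ := ih w' hcard' hin'
      refine ⟨z, SimpleGraph.Walk.cons hadj w, hz, ?_⟩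
      rw [SimpleGraph.Walk.support_cons, SimpleGraph.Walk.support_eq_cons w]
      rw [SimpleGraph.Walk.support_eq_cons w] at hchain
      exact List.isChain_cons_cons.mpr ⟨hw'u, hchain⟩

lemma key_path (hsl : ∀ l, src l ≠ tgt l) (hb : ∀ e, 0 < b e) (u p : Fin (n+1) → ℝ)
    (hdiv : ∀ v, ∑ e, incM src tgt v e * (b e * (u (src e) - u (tgt e))) = p v)
    (l : Fin m) (jhat : Fin (n+1)) (hsink : ∀ z, p z < 0 → z = jhat)
    (a c : Fin (n+1))
    (hl : (src l = a ∧ tgt l = c) ∨ (src l = c ∧ tgt l = a)) (hu : u c < u a) :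
    ∃ k, 0 < p k ∧ PathThrough src tgt jhat k l := by
  classical
  set fl : ℝ := b l * (u (src l) - u (tgt l)) with hfl
  have hca : c ≠ a := fun h => absurd (h ▸ hu) (lt_irrefl _)
  have hCc : incM src tgt c l * fl < 0 := by
    rcases hl with ⟨h1, h2⟩ | ⟨h1, h2⟩
    · have : incM src tgt c l = -1 := by rw [← h2]; exact incM_tgt src tgt hsl l
      rw [this, hfl, h1, h2, neg_one_mul]
      have := mul_pos (hb l) (show (0:ℝ) < u a - u c by linarith)
      linarith
    · have : incM src tgt c l = 1 := by rw [← h1]; exact incM_src src tgt l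
      rw [this, hfl, h1, h2, one_mul]
      have : u c - u a < 0 := by linarith
      exact mul_neg_of_pos_of_neg (hb l) this
  have hCa : 0 < incM src tgt a l * fl := by
    rcases hl with ⟨h1, h2⟩ | ⟨h1, h2⟩
    · have : incM src tgt a l = 1 := by rw [← h1]; exact incM_src src tgt l
      rw [this, hfl, h1, h2, one_mul]
      exact mul_pos (hb l) (by linarith)
    · have : incM src tgt a l = -1 := by rw [← h2]; exact incM_tgt src tgt hsl l
      rw [this, hfl, h1, h2, neg_one_mul, neg_pos]
      have : u c - u a < 0 := by linarith
      exact mul_neg_of_pos_of_neg (hb l) this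
  -- downhill walk from c
  obtain ⟨z, w₁, hz, hch₁⟩ := flow_escape src tgt b hsl hb u p hdiv
    (Finset.univ.filter (fun x => u x < u c)).card c le_rfl ⟨l, hCc⟩
  have hzj : z = jhat := hsink z hz
  subst hzj
  -- uphill walk from a, using the flipped system
  have hdiv' : ∀ v, ∑ e, incM src tgt v e *
      (b e * ((fun x => -u x) (src e) - (fun x => -u x) (tgt e))) = (fun x => -p x) v := by
    intro v
    have h1 : ∀ e, incM src tgt v e * (b e * (-u (src e) - -u (tgt e)))
        = -(incM src tgt v e * (b e * (u (src e) - u (tgt e)))) := fun e => by ring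
    simp only
    rw [Finset.sum_congr rfl fun e _ => h1 e, Finset.sum_neg_distrib, hdiv v]
  have hCa' : incM src tgt a l *
      (b l * ((fun x => -u x) (src l) - (fun x => -u x) (tgt l))) < 0 := by
    have h1 : incM src tgt a l * (b l * (-u (src l) - -u (tgt l))) = -(incM src tgt a l * fl) := by
      rw [hfl]; ring
    simp only
    rw [h1]
    linarith
  obtain ⟨k, w₂, hk, hch₂⟩ := flow_escape src tgt b hsl hb (fun x => -u x) (fun x => -p x) hdiv'
    (Finset.univ.filter (fun x => (fun y => -u y) x < (fun y => -u y) a)).card a le_rfl ⟨l, hCa'⟩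
  have hkp : 0 < p k := by simpa using neg_neg_iff_pos.mp (by simpa using hk)
  -- chain on w₂ is increasing in u
  have hch₂' : List.IsChain (fun x y => u x < u y) w₂.support := by
    refine List.IsChain.imp ?_ hch₂
    intro x y h
    simpa using h
  -- adjacency between c and a
  have hadj : (netGraph src tgt).Adj c a := by
    rw [netGraph, SimpleGraph.fromRel_adj]
    rcases hl with ⟨h1, h2⟩ | ⟨h1, h2⟩
    · exact ⟨hca, Or.inr ⟨l, h1, h2⟩⟩
    · exact ⟨hca, Or.inl ⟨l, h1, h2⟩⟩
  -- build the full walk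
  refine ⟨k, hkp, w₁.reverse.append (SimpleGraph.Walk.cons hadj w₂), ?_, ?_⟩
  · -- IsPath
    rw [SimpleGraph.Walk.isPath_def, SimpleGraph.Walk.support_append,
      SimpleGraph.Walk.support_reverse, SimpleGraph.Walk.support_cons]
    simp only [List.tail_cons]
    have hchain : List.IsChain (fun x y => u x < u y) (w₁.support.reverse ++ w₂.support) := by
      rw [List.isChain_append]
      refine ⟨?_, hch₂', ?_⟩
      · rw [List.isChain_reverse]
        exact hch₁
      · intro x hx y hy
        rw [List.getLast?_reverse, SimpleGraph.Walk.support_eq_cons w₁] at hx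
        rw [SimpleGraph.Walk.support_eq_cons w₂] at hy
        simp only [List.head?_cons, Option.mem_def, Option.some.injEq] at hx hy
        rw [← hx, ← hy]
        exact hu
    haveI : IsTrans (Fin (n+1)) (fun x y => u x < u y) := ⟨fun _ _ _ h1 h2 => h1.trans h2⟩
    have hpw := List.isChain_iff_pairwise.mp hchain
    exact hpw.imp fun h => fun heq => absurd (heq ▸ h) (lt_irrefl _)
  · -- edge membership
    rw [SimpleGraph.Walk.edges_append, SimpleGraph.Walk.edges_cons]
    have hse : s(src l, tgt l) = s(c, a) := by
      rcases hl with ⟨h1, h2⟩ | ⟨h1, h2⟩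
      · rw [h1, h2]; exact Sym2.eq_swap
      · rw [h1, h2]
    rw [hse]
    exact List.mem_append_right _ List.mem_cons_self

end SPCAux

/-- Simple Path Criterion, bridge outage, 'only if' direction.
If for every participating bus `k` there is no simple path in the network from `jhat` to `k`
containing line `l`, then `∑_k α_k D_{l,kĵ} = 0` for every choice of positive susceptances. -/
theorem simple_path_criterion_only_if
    {n m : ℕ} (src tgt : Fin m → Fin (n+1)) (hsl : ∀ l, src l ≠ tgt l)
    (hconn : (netGraph src tgt).Connected)
    (α : Fin (n+1) → ℝ) (hα0 : ∀ k, 0 ≤ α k) (hα1 : ∑ k, α k = 1)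
    (l : Fin m) (jhat : Fin (n+1))
    (hnopath : ∀ k, 0 < α k → ¬ PathThrough src tgt jhat k l) :
    ∀ b : Fin m → ℝ, (∀ e, 0 < b e) → ∑ k, α k * ptdf src tgt b l k jhat = 0 := by
  intro b hb
  classical
  set A := Amat src tgt b with hA
  set p : Fin (n+1) → ℝ := fun k => α k - (if k = jhat then 1 else 0) with hp
  have hpsum : ∑ k, p k = 0 := by
    simp only [hp]
    rw [Finset.sum_sub_distrib, hα1,
      Finset.sum_ite_eq' Finset.univ jhat (fun _ => (1:ℝ))]
    simp
  set u : Fin (n+1) → ℝ := A *ᵥ p with hu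
  have hdiv : ∀ v, ∑ e, incM src tgt v e * (b e * (u (src e) - u (tgt e))) = p v := by
    intro v
    rw [← L_mulVec src tgt b hsl u v, hu, hA]
    exact L_A_mulVec src tgt b hsl hconn hb p hpsum v
  have hsink : ∀ z, p z < 0 → z = jhat := by
    intro z hz
    by_contra hne
    simp only [hp, if_neg hne, sub_zero] at hz
    exact absurd hz (not_lt.mpr (hα0 z))
  have hud : ∀ v, u v = (∑ k, A v k * α k) - A v jhat := by
    intro v
    rw [hu]
    show ∑ k, A v k * p k = _
    simp only [hp]
    have h1 : ∀ k, A v k * (α k - (if k = jhat then 1 else 0))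
        = A v k * α k - (if k = jhat then A v k else 0) := by
      intro k; by_cases hk : k = jhat <;> simp [hk] <;> ring
    rw [Finset.sum_congr rfl fun k _ => h1 k, Finset.sum_sub_distrib,
      Finset.sum_ite_eq' Finset.univ jhat (fun k => A v k)]
    simp
  have hexp : ∑ k, α k * ptdf src tgt b l k jhat = b l * (u (src l) - u (tgt l)) := by
    have h1 : ∀ k, α k * ptdf src tgt b l k jhat
        = b l * (A (src l) k * α k) - b l * (A (tgt l) k * α k)
          + α k * (b l * (A (tgt l) jhat - A (src l) jhat)) := by
      intro k
      simp only [ptdf, ← hA]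
      ring
    rw [Finset.sum_congr rfl fun k _ => h1 k, Finset.sum_add_distrib, Finset.sum_sub_distrib,
      ← Finset.mul_sum, ← Finset.mul_sum, ← Finset.sum_mul, hα1, one_mul,
      hud (src l), hud (tgt l)]
    ring
  rw [hexp]
  have heq : u (src l) = u (tgt l) := by
    by_contra hne
    have hple : ∀ k, p k ≤ α k := by
      intro k
      simp only [hp]
      by_cases hk : k = jhat <;> simp [hk]
    rcases lt_or_gt_of_ne hne with h | h
    · obtain ⟨k, hk, hpath⟩ := key_path src tgt b hsl hb u p hdiv l jhat hsink
        (tgt l) (src l) (Or.inr ⟨rfl, rfl⟩) h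
      exact hnopath k (lt_of_lt_of_le hk (hple k)) hpath
    · obtain ⟨k, hk, hpath⟩ := key_path src tgt b hsl hb u p hdiv l jhat hsink
        (src l) (tgt l) (Or.inl ⟨rfl, rfl⟩) h
      exact hnopath k (lt_of_lt_of_le hk (hple k)) hpath
  rw [heq, sub_self, mul_zero]
end

section
/- Bridge outage block localization (non-impacted blocks): under a single bridge outage handled by proportional control, if a block E_r of G is not on any simple path between bus ĵ and a participating bus (i.e., for every participating bus k, no simple path in G from ĵ to k contains a line of E_r), then f̃_l = f_l for every line l ∈ E_r, and this holds for every choice of positive susceptances. -/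
open Matrix MeasureTheory

variable {n m : ℕ}

lemma out_step {n m : ℕ} (src tgt : Fin m → Fin (n+1)) (hsl : ∀ l, src l ≠ tgt l)
    (b : Fin m → ℝ) (hb : ∀ l, 0 < b l) (δ : Fin (n+1) → ℝ) (g : Fin m → ℝ)
    (hg : ∀ l, g l = b l * (δ (src l) - δ (tgt l)))
    (q : Fin (n+1) → ℝ) (hq : ∀ u, ∑ l, incM src tgt u l * g l = q u)
    (u : Fin (n+1)) (hin : ∃ l, (tgt l = u ∧ 0 < g l) ∨ (src l = u ∧ g l < 0))
    (hqu : 0 ≤ q u) :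
    ∃ w', δ w' < δ u ∧ (netGraph src tgt).Adj u w' ∧
      (∃ l, (tgt l = w' ∧ 0 < g l) ∨ (src l = w' ∧ g l < 0)) := by
  have hout : ∃ l, (src l = u ∧ 0 < g l) ∨ (tgt l = u ∧ g l < 0) := by
    by_contra hno
    obtain ⟨l₀, hl₀⟩ := hin
    have hle : ∀ l : Fin m, incM src tgt u l * g l ≤ 0 := by
      intro l
      simp only [incM, Matrix.of_apply]
      by_cases h1 : src l = u
      · have hgl : ¬ (0 < g l) := fun h => hno ⟨l, Or.inl ⟨h1, h⟩⟩
        simp only [if_pos h1, one_mul]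
        linarith [not_lt.mp hgl]
      · by_cases h2 : tgt l = u
        · have hgl : ¬ (g l < 0) := fun h => hno ⟨l, Or.inr ⟨h2, h⟩⟩
          simp only [if_neg h1, if_pos h2, neg_one_mul]
          linarith [not_lt.mp hgl]
        · simp [h1, h2]
    have hlt : ∃ l₀, incM src tgt u l₀ * g l₀ < 0 := by
      refine ⟨l₀, ?_⟩
      rcases hl₀ with ⟨h2, hpos⟩ | ⟨h1, hneg⟩
      · have h1 : src l₀ ≠ u := fun h => hsl l₀ (h.trans h2.symm)
        simp only [incM, Matrix.of_apply, if_neg h1, if_pos h2]; linarith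
      · simp only [incM, Matrix.of_apply, if_pos h1]; linarith
    obtain ⟨l₀', hl₀'⟩ := hlt
    have : ∑ l, incM src tgt u l * g l < ∑ _l : Fin m, (0:ℝ) :=
      Finset.sum_lt_sum (fun i _ => hle i) ⟨l₀', Finset.mem_univ _, by simpa using hl₀'⟩
    rw [hq u] at this
    simp at this
    linarith
  obtain ⟨l₁, hl₁⟩ := hout
  rcases hl₁ with ⟨h1, hpos⟩ | ⟨h2, hneg⟩
  · refine ⟨tgt l₁, ?_, ?_, ⟨l₁, Or.inl ⟨rfl, hpos⟩⟩⟩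
    · have := hg l₁
      rw [h1] at this
      nlinarith [hb l₁]
    · refine (SimpleGraph.fromRel_adj _ _ _).mpr ⟨?_, Or.inl ⟨l₁, h1, rfl⟩⟩
      intro h
      have := hg l₁
      rw [h1, ← h] at this
      nlinarith
  · refine ⟨src l₁, ?_, ?_, ⟨l₁, Or.inr ⟨rfl, hneg⟩⟩⟩
    · have := hg l₁
      rw [h2] at this
      nlinarith [hb l₁]
    · refine (SimpleGraph.fromRel_adj _ _ _).mpr ⟨?_, Or.inr ⟨l₁, rfl, h2⟩⟩
      intro h
      have := hg l₁
      rw [h2, h] at this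
      nlinarith

lemma descend {n m : ℕ} (src tgt : Fin m → Fin (n+1)) (hsl : ∀ l, src l ≠ tgt l)
    (b : Fin m → ℝ) (hb : ∀ l, 0 < b l) (δ : Fin (n+1) → ℝ) (g : Fin m → ℝ)
    (hg : ∀ l, g l = b l * (δ (src l) - δ (tgt l)))
    (q : Fin (n+1) → ℝ) (hq : ∀ u, ∑ l, incM src tgt u l * g l = q u) :
    ∀ (N : ℕ) (u : Fin (n+1)),
      (Finset.univ.filter fun v => δ v < δ u).card ≤ N →
      (∃ l, (tgt l = u ∧ 0 < g l) ∨ (src l = u ∧ g l < 0)) →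
      ∃ (k : Fin (n+1)) (w : (netGraph src tgt).Walk u k), w.IsPath ∧ q k < 0 ∧
        ∀ v ∈ w.support, v = u ∨ δ v < δ u := by
  intro N
  induction N with
  | zero =>
    intro u hcard hin
    by_cases hqu : q u < 0
    · exact ⟨u, .nil, SimpleGraph.Walk.IsPath.nil, hqu, by simp⟩
    · exfalso
      obtain ⟨w', hw', _, _⟩ := out_step src tgt hsl b hb δ g hg q hq u hin (not_lt.mp hqu)
      have : w' ∈ Finset.univ.filter fun v => δ v < δ u := by simp [hw']
      have := Finset.card_pos.mpr ⟨w', this⟩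
      omega
  | succ N ih =>
    intro u hcard hin
    by_cases hqu : q u < 0
    · exact ⟨u, .nil, SimpleGraph.Walk.IsPath.nil, hqu, by simp⟩
    · obtain ⟨w', hw', hadj, hin'⟩ := out_step src tgt hsl b hb δ g hg q hq u hin (not_lt.mp hqu)
      have hsub : (Finset.univ.filter fun v => δ v < δ w') ⊂
          (Finset.univ.filter fun v => δ v < δ u) := by
        refine Finset.ssubset_iff_of_subset ?_ |>.mpr ⟨w', by simp [hw'], by simp⟩
        intro x hx
        simp only [Finset.mem_filter, Finset.mem_univ, true_and] at hx ⊢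
        linarith
      have hcard' : (Finset.univ.filter fun v => δ v < δ w').card ≤ N := by
        have := Finset.card_lt_card hsub
        omega
      obtain ⟨k, w₂, hpath, hk, hsupp⟩ := ih w' hcard' hin'
      refine ⟨k, .cons hadj w₂, hpath.cons ?_, hk, ?_⟩
      · intro hu
        rcases hsupp u hu with h | h
        · exact absurd h.symm (by intro h'; rw [h'] at hw'; exact lt_irrefl _ hw')
        · linarith
      · intro v hv
        rw [SimpleGraph.Walk.support_cons] at hv
        rcases List.mem_cons.mp hv with h | h
        · exact Or.inl h
        · rcases hsupp v h with h' | h'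
          · exact Or.inr (h' ▸ hw')
          · exact Or.inr (by linarith)

lemma key {n m : ℕ} (src tgt : Fin m → Fin (n+1)) (hsl : ∀ l, src l ≠ tgt l)
    (b : Fin m → ℝ) (hb : ∀ l, 0 < b l) (δ : Fin (n+1) → ℝ) (g : Fin m → ℝ)
    (hg : ∀ l, g l = b l * (δ (src l) - δ (tgt l)))
    (q : Fin (n+1) → ℝ) (hq : ∀ u, ∑ l, incM src tgt u l * g l = q u)
    (lst : Fin m) (hgl : g lst ≠ 0) :
    ∃ (kp km : Fin (n+1)) (W : (netGraph src tgt).Walk kp km), W.IsPath ∧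
      0 < q kp ∧ q km < 0 ∧ s(src lst, tgt lst) ∈ W.edges := by
  have hq' : ∀ u, ∑ l, incM src tgt u l * (fun l => -g l) l = (fun u => -q u) u := by
    intro u
    simp only [mul_neg]
    rw [Finset.sum_neg_distrib, hq u]
  have hg' : ∀ l, (fun l => -g l) l = b l * ((fun v => -δ v) (src l) - (fun v => -δ v) (tgt l)) := by
    intro l; simp only; rw [hg l]; ring
  -- choose endpoints a (high potential) and v (low potential) of the line lst
  obtain ⟨a, v, hδav, hadj, hedge, hupin, hdownin⟩ :
      ∃ a v : Fin (n+1), δ v < δ a ∧ (netGraph src tgt).Adj a v ∧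
        s(src lst, tgt lst) = s(a, v) ∧
        (∃ l, (tgt l = a ∧ (fun l => -g l) l > 0) ∨ (src l = a ∧ (fun l => -g l) l < 0)) ∧
        (∃ l, (tgt l = v ∧ 0 < g l) ∨ (src l = v ∧ g l < 0)) := by
    rcases lt_or_gt_of_ne hgl with hneg | hpos
    · refine ⟨tgt lst, src lst, ?_, ?_, Sym2.eq_swap, ⟨lst, Or.inl ⟨rfl, by simpa using hneg⟩⟩,
        ⟨lst, Or.inr ⟨rfl, hneg⟩⟩⟩
      · have := hg lst; nlinarith [hb lst]
      · refine (SimpleGraph.fromRel_adj _ _ _).mpr ⟨?_, Or.inr ⟨lst, rfl, rfl⟩⟩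
        exact fun h => hsl lst h.symm
    · refine ⟨src lst, tgt lst, ?_, ?_, rfl, ⟨lst, Or.inr ⟨rfl, by simpa using hpos⟩⟩,
        ⟨lst, Or.inl ⟨rfl, hpos⟩⟩⟩
      · have := hg lst; nlinarith [hb lst]
      · exact (SimpleGraph.fromRel_adj _ _ _).mpr ⟨hsl lst, Or.inl ⟨lst, rfl, rfl⟩⟩
  obtain ⟨kp, w₁, hw₁path, hkp, hsupp₁⟩ :=
    descend src tgt hsl b hb (fun v => -δ v) (fun l => -g l) hg' (fun u => -q u) hq'
      (Finset.univ.filter fun x => -δ x < -δ a).card a le_rfl hupin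
  obtain ⟨km, w₂, hw₂path, hkm, hsupp₂⟩ :=
    descend src tgt hsl b hb δ g hg q hq
      (Finset.univ.filter fun x => δ x < δ v).card v le_rfl hdownin
  refine ⟨kp, km, w₁.reverse.append (SimpleGraph.Walk.cons hadj w₂), ?_, by linarith, hkm, ?_⟩
  · rw [SimpleGraph.Walk.isPath_def, SimpleGraph.Walk.support_append,
      SimpleGraph.Walk.support_reverse, SimpleGraph.Walk.support_cons, List.tail_cons]
    rw [List.nodup_append]
    refine ⟨List.nodup_reverse.mpr (SimpleGraph.Walk.isPath_def _ |>.mp hw₁path), 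
      SimpleGraph.Walk.isPath_def _ |>.mp hw₂path, ?_⟩
    intro x hx y hx' hxy; subst hxy
    have h1 : δ a ≤ δ x := by
      rcases hsupp₁ x (List.mem_reverse.mp hx) with h | h
      · rw [h]
      · simp only [neg_lt_neg_iff] at h; linarith
    have h2 : δ x ≤ δ v := by
      rcases hsupp₂ x hx' with h | h
      · rw [h]
      · linarith
    linarith
  · rw [SimpleGraph.Walk.edges_append, SimpleGraph.Walk.edges_cons]
    rw [hedge]
    exact List.mem_append_right _ List.mem_cons_self

lemma sum_col {n m : ℕ} (src tgt : Fin m → Fin (n+1)) (hsl : ∀ l, src l ≠ tgt l)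
    (θ : Fin (n+1) → ℝ) (l : Fin m) :
    ∑ i, incM src tgt i l * θ i = θ (src l) - θ (tgt l) := by
  have : ∀ i, incM src tgt i l * θ i =
      (if src l = i then θ i else 0) + (if tgt l = i then -θ i else 0) := by
    intro i
    simp only [incM, Matrix.of_apply]
    by_cases h1 : src l = i
    · have h2 : tgt l ≠ i := fun h => hsl l (h1.trans h.symm)
      simp [h1, h2]
    · by_cases h2 : tgt l = i
      · simp [h1, h2]
      · simp [h1, h2]
  rw [Finset.sum_congr rfl fun i _ => this i, Finset.sum_add_distrib,
    Finset.sum_ite_eq Finset.univ (src l) θ, Finset.sum_ite_eq Finset.univ (tgt l) (fun i => -θ i)]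
  simp
  ring

lemma flow_form {n m : ℕ} (src tgt : Fin m → Fin (n+1)) (hsl : ∀ l, src l ≠ tgt l)
    (b : Fin m → ℝ) (θ : Fin (n+1) → ℝ) (l : Fin m) :
    ((Matrix.diagonal b * (incM src tgt)ᵀ).mulVec θ) l = b l * (θ (src l) - θ (tgt l)) := by
  rw [← sum_col src tgt hsl θ l]
  simp only [Matrix.mulVec, dotProduct, Matrix.diagonal_mul, Matrix.transpose_apply]
  rw [Finset.mul_sum]
  exact Finset.sum_congr rfl fun i _ => by ring


/-- bridge outage block localization, non-impacted blocks.
Under a single bridge outage at bus `jhat` handled by proportional control, if a block `Er` of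
the network is not on any simple path between `jhat` and a participating bus, then the branch
flow is unchanged on every line of `Er`, for every choice of positive susceptances. -/
theorem bridge_outage_block_not_impacted
    {n m : ℕ} (src tgt : Fin m → Fin (n+1)) (hsl : ∀ l, src l ≠ tgt l)
    (hconn : (netGraph src tgt).Connected)
    (α : Fin (n+1) → ℝ) (hα0 : ∀ k, 0 ≤ α k) (hα1 : ∑ k, α k = 1)
    (jhat : Fin (n+1)) (flhat : ℝ) (hflhat : flhat ≠ 0)
    (Er : Set (Fin m)) (hEr : ∃ e₀, Er = {e | sameBlock src tgt e₀ e})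
    (hnot : ∀ k, 0 < α k → ∀ e ∈ Er, ¬ PathThrough src tgt jhat k e) :
    ∀ b : Fin m → ℝ, (∀ e, 0 < b e) →
    ∀ (p θ θt : Fin (n+1) → ℝ) (f ft : Fin m → ℝ),
      (incM src tgt).mulVec f = p + flhat • evec jhat →
      f = (Matrix.diagonal b * (incM src tgt)ᵀ).mulVec θ →
      (incM src tgt).mulVec ft = p + flhat • ∑ k, α k • evec k →
      ft = (Matrix.diagonal b * (incM src tgt)ᵀ).mulVec θt →
      ∀ l ∈ Er, ft l = f l := by
  intro b hb p θ θt f ft hf1 hf2 hft1 hft2 lst hlst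
  by_contra hne
  set g : Fin m → ℝ := fun l => ft l - f l with hgdef
  set δ : Fin (n+1) → ℝ := fun u => θt u - θ u with hδdef
  set q : Fin (n+1) → ℝ := fun u => flhat * (α u - if u = jhat then 1 else 0) with hqdef
  have hg : ∀ l, g l = b l * (δ (src l) - δ (tgt l)) := by
    intro l
    simp only [hgdef, hδdef, hf2, hft2, flow_form src tgt hsl]
    ring
  have hα : ∀ u : Fin (n+1), (∑ k, α k • evec k) u = α u := by
    intro u
    simp only [Finset.sum_apply, Pi.smul_apply, evec, Pi.single_apply, smul_eq_mul, mul_ite,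
      mul_one, mul_zero]
    rw [Finset.sum_ite_eq]
    simp
  have hq : ∀ u, ∑ l, incM src tgt u l * g l = q u := by
    intro u
    have h1 := congrFun hf1 u
    have h2 := congrFun hft1 u
    have hmv : ∀ (x : Fin m → ℝ), (incM src tgt).mulVec x u = ∑ l, incM src tgt u l * x l := by
      intro x; simp [Matrix.mulVec, dotProduct]
    rw [hmv] at h1 h2
    have : ∑ l, incM src tgt u l * g l =
        (∑ l, incM src tgt u l * ft l) - (∑ l, incM src tgt u l * f l) := by
      rw [← Finset.sum_sub_distrib]
      exact Finset.sum_congr rfl fun l _ => by simp [hgdef]; ring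
    rw [this, h1, h2]
    simp only [Pi.add_apply, Pi.smul_apply, smul_eq_mul]
    rw [hα u]
    simp only [hqdef, evec, Pi.single_apply]
    ring
  have hglst : g lst ≠ 0 := fun h => hne (by simpa [hgdef, sub_eq_zero] using h)
  obtain ⟨kp, km, W, hWpath, hkp, hkm, hWe⟩ :=
    key src tgt hsl b hb δ g hg q hq lst hglst
  have hαle : ∀ k, α k ≤ 1 := by
    intro k
    rw [← hα1]
    exact Finset.single_le_sum (fun i _ => hα0 i) (Finset.mem_univ k)
  rcases lt_or_gt_of_ne hflhat with hfneg | hfpos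
  · -- flhat < 0 : kp = jhat, km participating
    have hkpj : kp = jhat := by
      by_contra h
      simp only [hqdef, if_neg h] at hkp
      nlinarith [hα0 kp]
    have hkmj : km ≠ jhat ∧ 0 < α km := by
      constructor
      · intro h
        simp only [hqdef, if_pos h] at hkm
        nlinarith [hαle km]
      · by_contra h
        have : α km = 0 := le_antisymm (not_lt.mp h) (hα0 km)
        simp only [hqdef, this] at hkm
        by_cases h' : km = jhat <;> simp [h'] at hkm <;> nlinarith
    subst hkpj
    exact hnot km hkmj.2 lst hlst ⟨W, hWpath, hWe⟩
  · -- flhat > 0 : km = jhat, kp participating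
    have hkmj : km = jhat := by
      by_contra h
      simp only [hqdef, if_neg h] at hkm
      nlinarith [hα0 km]
    have hkpj : kp ≠ jhat ∧ 0 < α kp := by
      constructor
      · intro h
        simp only [hqdef, if_pos h] at hkp
        nlinarith [hαle kp]
      · by_contra h
        have : α kp = 0 := le_antisymm (not_lt.mp h) (hα0 kp)
        simp only [hqdef, this] at hkp
        by_cases h' : kp = jhat <;> simp [h'] at hkp <;> nlinarith
    subst hkmj
    refine hnot kp hkpj.2 lst hlst ⟨W.reverse, hWpath.reverse, ?_⟩
    rw [SimpleGraph.Walk.edges_reverse, List.mem_reverse]; exact hWe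
end

section
/- Path-through-a-block lemma: let G be a connected graph, let C be a block of G that is 2-connected, let l = (i,j) be an edge of C, let u be a vertex of C that is not a cut vertex of G, and let v be a vertex of G not belonging to C. Then there exists a simple path in G from v to u that contains the edge l. -/
/-- `H` has no cut vertex of its own. -/
def HasNoCutVertex {V : Type*} (H : SimpleGraph V) : Prop :=
  ∀ v : V, ¬ IsCutVertex H v

/-- `S` induces a block of `G`: a maximal connected induced subgraph having no cut vertex of
its own. -/
def IsVertexBlock {V : Type*} (G : SimpleGraph V) (S : Set V) : Prop :=
  (G.induce S).Connected ∧ HasNoCutVertex (G.induce S) ∧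
    ∀ T : Set V, S ⊆ T → (G.induce T).Connected → HasNoCutVertex (G.induce T) → T = S

namespace PTB

open SimpleGraph Walk

variable {W : Type*} {H : SimpleGraph W}

lemma avoid_path {w a b : W} (hnc : ¬ IsCutVertex H w) (ha : a ≠ w) (hb : b ≠ w) :
    ∃ p : H.Walk a b, p.IsPath ∧ w ∉ p.support := by
  classical
  rw [IsCutVertex, not_not] at hnc
  obtain ⟨p0⟩ := hnc ⟨a, ha⟩ ⟨b, hb⟩
  let p1 : H.Walk a b := p0.map (SimpleGraph.Embedding.induce {x : W | x ≠ w}).toHom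
  refine ⟨p1.bypass, p1.bypass_isPath, fun hw => ?_⟩
  have h2 := p1.support_bypass_subset hw
  rw [show p1.support = _ from SimpleGraph.Walk.support_map _ _] at h2
  obtain ⟨y, hy, hyw⟩ := List.mem_map.mp h2
  exact y.2 hyw

lemma first_hit {D : Set W} : ∀ {a b : W} (p : H.Walk a b), b ∈ D →
    ∃ z ∈ D, ∃ q : H.Walk a z, q.support ⊆ p.support ∧ ∀ y ∈ q.support, y ∈ D → y = z
  | a, _, Walk.nil, hb =>
    ⟨a, hb, .nil, List.Subset.refl _, fun y hy _ => by simpa using hy⟩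
  | a, b, Walk.cons h p, hb => by
    by_cases hu : a ∈ D
    · refine ⟨a, hu, .nil, ?_, fun y hy _ => by simpa using hy⟩
      intro y hy; simp only [Walk.support_nil, List.mem_singleton] at hy
      simp [hy, Walk.support_cons]
    · obtain ⟨z, hz, q, hsub, hq⟩ := first_hit p hb
      refine ⟨z, hz, .cons h q, ?_, ?_⟩
      · intro y hy
        rw [Walk.support_cons, List.mem_cons] at hy ⊢
        rcases hy with hy | hy
        · exact Or.inl hy
        · exact Or.inr (hsub hy)
      · intro y hy hyD
        rw [Walk.support_cons, List.mem_cons] at hy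
        rcases hy with rfl | hy
        · exact absurd hyD hu
        · exact hq y hy hyD

lemma IsPath.append' {a b c : W} {p : H.Walk a b} {q : H.Walk b c}
    (hp : p.IsPath) (hq : q.IsPath)
    (hmeet : ∀ z ∈ p.support, z ∈ q.support → z = b) : (p.append q).IsPath := by
  have hqt := q.support_eq_cons ▸ hq.support_nodup
  rw [List.nodup_cons] at hqt
  rw [Walk.isPath_def, Walk.support_append]
  refine List.Nodup.append hp.support_nodup hqt.2 ?_
  intro z hzp hzq
  have hzq' : z ∈ q.support := by
    rw [q.support_eq_cons]; exact List.mem_cons_of_mem _ hzq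
  have hz : z = b := hmeet z hzp hzq'
  subst hz
  exact hqt.1 hzq

lemma path_split {a c y : W} {p : H.Walk a c} (hp : p.IsPath) (hy : y ∈ p.support) :
    ∃ (q : H.Walk a y) (r : H.Walk y c), q.IsPath ∧ r.IsPath ∧
      q.support ⊆ p.support ∧ r.support ⊆ p.support ∧
      ∀ z ∈ q.support, z ∈ r.support → z = y := by
  classical
  refine ⟨p.takeUntil y hy, p.dropUntil y hy, hp.takeUntil hy, hp.dropUntil hy,
    p.support_takeUntil_subset hy, p.support_dropUntil_subset hy, ?_⟩
  intro z hzq hzr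
  by_contra hzy
  have hnd := hp.support_nodup
  rw [← p.take_spec hy, Walk.support_append] at hnd
  have hzr' : z ∈ (p.dropUntil y hy).support.tail := by
    rw [(p.dropUntil y hy).support_eq_cons, List.mem_cons] at hzr
    rcases hzr with h | h
    · exact absurd h hzy
    · exact h
  exact (List.disjoint_of_nodup_append hnd) hzq hzr'


lemma tp_case_mem {a w b : W} {P₁ P₂ : H.Walk a w} (hP₁ : P₁.IsPath) (hP₂ : P₂.IsPath)
    (hI : ∀ z ∈ P₁.support, z ∈ P₂.support → z = a ∨ z = w)
    (hb : b ∈ P₁.support) (hba : b ≠ a) (hbw : b ≠ w) :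
    ∃ (p q : H.Walk a b), p.IsPath ∧ q.IsPath ∧
      ∀ z ∈ p.support, z ∈ q.support → z = a ∨ z = b := by
  obtain ⟨q, r, hq, hr, hqs, hrs, hqr⟩ := path_split hP₁ hb
  refine ⟨q, P₂.append r.reverse, hq, ?_, ?_⟩
  · refine IsPath.append' hP₂ hr.reverse ?_
    intro z hz2 hzr
    rw [Walk.support_reverse, List.mem_reverse] at hzr
    rcases hI z (hrs hzr) hz2 with rfl | rfl
    · exact absurd (hqr _ q.start_mem_support hzr).symm hba
    · rfl
  · intro z hzq hzQ2
    rcases (Walk.mem_support_append_iff _ _).mp hzQ2 with hz2 | hzr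
    · rcases hI z (hqs hzq) hz2 with h | rfl
      · exact Or.inl h
      · exact absurd (hqr _ hzq r.end_mem_support).symm hbw
    · rw [Walk.support_reverse, List.mem_reverse] at hzr
      exact Or.inr (hqr _ hzq hzr)

lemma tp_case_notmem {a w b z : W} {P₁ P₂ : H.Walk a w} (hP₁ : P₁.IsPath) (hP₂ : P₂.IsPath)
    (hI : ∀ y ∈ P₁.support, y ∈ P₂.support → y = a ∨ y = w)
    (hadj : H.Adj w b) (hb2 : b ∉ P₂.support)
    {T : H.Walk b z} (hT : T.IsPath) (hz1 : z ∈ P₁.support)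
    (hTD : ∀ y ∈ T.support, (y ∈ P₁.support ∨ y ∈ P₂.support) → y = z)
    (hwT : w ∉ T.support) (hzw : z ≠ w) :
    ∃ (p q : H.Walk a b), p.IsPath ∧ q.IsPath ∧
      ∀ z' ∈ p.support, z' ∈ q.support → z' = a ∨ z' = b := by
  obtain ⟨q, r, hq, hr, hqs, hrs, hqr⟩ := path_split hP₁ hz1
  have hedge : (Walk.cons hadj Walk.nil : H.Walk w b).IsPath := by
    simp [Walk.isPath_def, hadj.ne]
  refine ⟨q.append T.reverse, P₂.append (Walk.cons hadj Walk.nil), ?_, ?_, ?_⟩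
  · refine IsPath.append' hq hT.reverse ?_
    intro y hyq hyT
    rw [Walk.support_reverse, List.mem_reverse] at hyT
    exact hTD y hyT (Or.inl (hqs hyq))
  · refine IsPath.append' hP₂ hedge ?_
    intro y hy2 hyE
    simp only [Walk.support_cons, Walk.support_nil, List.mem_cons, List.mem_singleton] at hyE
    rcases hyE with rfl | rfl | h
    · rfl
    · exact absurd hy2 hb2
    · exact absurd h (by simp)
  · intro y hy1 hy2
    rcases (Walk.mem_support_append_iff _ _).mp hy2 with hyP2 | hyE
    · rcases (Walk.mem_support_append_iff _ _).mp hy1 with hyq | hyT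
      · rcases hI y (hqs hyq) hyP2 with h | rfl
        · exact Or.inl h
        · exact absurd (hqr _ hyq r.end_mem_support).symm hzw
      · rw [Walk.support_reverse, List.mem_reverse] at hyT
        have hyz := hTD y hyT (Or.inr hyP2)
        subst hyz
        rcases hI y hz1 hyP2 with h | rfl
        · exact Or.inl h
        · exact absurd rfl hzw
    · simp only [Walk.support_cons, Walk.support_nil, List.mem_cons, List.mem_singleton] at hyE
      rcases hyE with rfl | rfl | h
      · rcases (Walk.mem_support_append_iff _ _).mp hy1 with hyq | hyT
        · exact absurd (hqr _ hyq r.end_mem_support).symm hzw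
        · rw [Walk.support_reverse, List.mem_reverse] at hyT
          exact absurd hyT hwT
      · exact Or.inr rfl
      · exact absurd h (by simp)

lemma two_paths (hc : H.Connected) (hnc : HasNoCutVertex H) :
    ∀ (n : ℕ) {a b : W}, a ≠ b → H.dist a b = n →
    ∃ (p q : H.Walk a b), p.IsPath ∧ q.IsPath ∧
      ∀ z ∈ p.support, z ∈ q.support → z = a ∨ z = b := by
  classical
  intro n
  induction n using Nat.strong_induction_on with
  | _ n ih =>
  intro a b hab hd
  match n, hd with
  | 0, hd => exact absurd (hc.dist_eq_zero_iff.mp hd) hab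
  | 1, hd =>
    have hadj : H.Adj a b := SimpleGraph.dist_eq_one_iff_adj.mp hd
    refine ⟨Walk.cons hadj Walk.nil, Walk.cons hadj Walk.nil, ?_, ?_, ?_⟩
    · simp [Walk.isPath_def, hadj.ne]
    · simp [Walk.isPath_def, hadj.ne]
    · intro z hz _
      simp only [Walk.support_cons, Walk.support_nil, List.mem_cons, List.mem_singleton] at hz
      rcases hz with rfl | rfl | h
      · exact Or.inl rfl
      · exact Or.inr rfl
      · exact absurd h (by simp)
  | (m+2), hd =>
    obtain ⟨p0, hp0len⟩ := hc.exists_walk_length_eq_dist b a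
    rw [SimpleGraph.dist_comm, hd] at hp0len
    cases p0 with
    | nil => exact absurd rfl hab.symm
    | @cons _ w _ h q0 =>
      have hq0len : q0.length = m + 1 := by
        simpa using hp0len
      have hdw_le : H.dist a w ≤ m + 1 := by
        have := SimpleGraph.dist_le q0.reverse
        rwa [Walk.length_reverse, hq0len] at this
      have hdw_ge : m + 1 ≤ H.dist a w := by
        have h1 : H.dist a b ≤ H.dist a w + H.dist w b := hc.dist_triangle
        have h2 : H.dist w b ≤ 1 := by
          simpa using SimpleGraph.dist_le (Walk.cons h.symm Walk.nil)
        omega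
      have hdw : H.dist a w = m + 1 := le_antisymm hdw_le hdw_ge
      have haw : a ≠ w := by
        intro hh; rw [hh, SimpleGraph.dist_self] at hdw; omega
      obtain ⟨P₁, P₂, hP₁, hP₂, hI⟩ := ih (m+1) (by omega) haw hdw
      have hbw : b ≠ w := h.ne
      by_cases hb1 : b ∈ P₁.support
      · exact tp_case_mem hP₁ hP₂ hI hb1 hab.symm hbw
      · by_cases hb2 : b ∈ P₂.support
        · exact tp_case_mem hP₂ hP₁ (fun z h2 h1 => hI z h1 h2) hb2 hab.symm hbw
        · obtain ⟨R0, hR0, hwR0⟩ := avoid_path (hnc w) hbw haw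
          obtain ⟨z, hzD, T0, hT0sub, hT0D⟩ :=
            first_hit (D := {y | y ∈ P₁.support ∨ y ∈ P₂.support}) R0
              (Or.inl P₁.start_mem_support)
          have hT : T0.bypass.IsPath := T0.bypass_isPath
          have hTsub : T0.bypass.support ⊆ R0.support :=
            List.Subset.trans T0.support_bypass_subset hT0sub
          have hTD : ∀ y ∈ T0.bypass.support, (y ∈ P₁.support ∨ y ∈ P₂.support) → y = z :=
            fun y hy => hT0D y (T0.support_bypass_subset hy)
          have hwT : w ∉ T0.bypass.support := fun hh => hwR0 (hTsub hh)
          have hzw : z ≠ w := by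
            intro hh; subst hh
            exact hwR0 (hTsub T0.bypass.end_mem_support)
          rcases hzD with hz1 | hz2
          · exact tp_case_notmem hP₁ hP₂ hI h.symm hb2 hT hz1 hTD hwT hzw
          · exact tp_case_notmem hP₂ hP₁ (fun y h2 h1 => hI y h1 h2) h.symm hb1 hT hz2
              (fun y hy hD => hTD y hy hD.symm) hwT hzw


lemma fan_case_mem {b y₁ y₂ : W} {P₁ P₂ : H.Walk b y₁} (hP₁ : P₁.IsPath) (hP₂ : P₂.IsPath)
    (hI : ∀ z ∈ P₁.support, z ∈ P₂.support → z = b ∨ z = y₁)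
    (h2 : y₂ ∈ P₁.support) (h21 : y₂ ≠ y₁) (h2b : y₂ ≠ b) :
    ∃ (R₁ : H.Walk b y₁) (R₂ : H.Walk b y₂), R₁.IsPath ∧ R₂.IsPath ∧
      (∀ z ∈ R₁.support, z ∈ R₂.support → z = b) ∧
      y₂ ∉ R₁.support ∧ y₁ ∉ R₂.support := by
  obtain ⟨q, r, hq, hr, hqs, hrs, hqr⟩ := path_split hP₁ h2
  have hy₁q : y₁ ∉ q.support := fun hh =>
    h21.symm (hqr _ hh r.end_mem_support)
  refine ⟨P₂, q, hP₂, hq, ?_, ?_, hy₁q⟩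
  · intro z hz2 hzq
    rcases hI z (hqs hzq) hz2 with h | rfl
    · exact h
    · exact absurd hzq hy₁q
  · intro hy2
    rcases hI y₂ h2 hy2 with rfl | rfl
    · exact absurd rfl h2b
    · exact absurd rfl h21

lemma fan_case_notmem {b y₁ y₂ z : W} {P₁ P₂ : H.Walk b y₁} (hP₁ : P₁.IsPath) (hP₂ : P₂.IsPath)
    (hI : ∀ y ∈ P₁.support, y ∈ P₂.support → y = b ∨ y = y₁)
    (h2P2 : y₂ ∉ P₂.support)
    {T : H.Walk y₂ z} (hT : T.IsPath) (hz1 : z ∈ P₁.support)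
    (hTD : ∀ y ∈ T.support, (y ∈ P₁.support ∨ y ∈ P₂.support) → y = z)
    (hy₁T : y₁ ∉ T.support) (hzy₁ : z ≠ y₁) :
    ∃ (R₁ : H.Walk b y₁) (R₂ : H.Walk b y₂), R₁.IsPath ∧ R₂.IsPath ∧
      (∀ z' ∈ R₁.support, z' ∈ R₂.support → z' = b) ∧
      y₂ ∉ R₁.support ∧ y₁ ∉ R₂.support := by
  obtain ⟨q, r, hq, hr, hqs, hrs, hqr⟩ := path_split hP₁ hz1
  have hy₁q : y₁ ∉ q.support := fun hh =>
    hzy₁.symm (hqr _ hh r.end_mem_support)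
  refine ⟨P₂, q.append T.reverse, hP₂, ?_, ?_, h2P2, ?_⟩
  · refine IsPath.append' hq hT.reverse ?_
    intro y hyq hyT
    rw [Walk.support_reverse, List.mem_reverse] at hyT
    exact hTD y hyT (Or.inl (hqs hyq))
  · intro y hy2 hyR2
    rcases (Walk.mem_support_append_iff _ _).mp hyR2 with hyq | hyT
    · rcases hI y (hqs hyq) hy2 with h | rfl
      · exact h
      · exact absurd hyq hy₁q
    · rw [Walk.support_reverse, List.mem_reverse] at hyT
      have := hTD y hyT (Or.inr hy2)
      subst this
      rcases hI y hz1 hy2 with h | rfl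
      · exact h
      · exact absurd rfl hzy₁
  · intro hh
    rcases (Walk.mem_support_append_iff _ _).mp hh with hyq | hyT
    · exact hy₁q hyq
    · rw [Walk.support_reverse, List.mem_reverse] at hyT
      exact hy₁T hyT

lemma fan (hc : H.Connected) (hnc : HasNoCutVertex H) {b y₁ y₂ : W}
    (hb1 : b ≠ y₁) (hb2 : b ≠ y₂) (hy : y₁ ≠ y₂) :
    ∃ (R₁ : H.Walk b y₁) (R₂ : H.Walk b y₂), R₁.IsPath ∧ R₂.IsPath ∧
      (∀ z ∈ R₁.support, z ∈ R₂.support → z = b) ∧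
      y₂ ∉ R₁.support ∧ y₁ ∉ R₂.support := by
  classical
  obtain ⟨P₁, P₂, hP₁, hP₂, hI⟩ := two_paths hc hnc (H.dist b y₁) hb1 rfl
  by_cases h1 : y₂ ∈ P₁.support
  · exact fan_case_mem hP₁ hP₂ hI h1 hy.symm hb2.symm
  · by_cases h2 : y₂ ∈ P₂.support
    · exact fan_case_mem hP₂ hP₁ (fun z ha hb => hI z hb ha) h2 hy.symm hb2.symm
    · obtain ⟨R0, hR0, hy₁R0⟩ := avoid_path (hnc y₁) hy.symm hb1
      obtain ⟨z, hzD, T0, hT0sub, hT0D⟩ :=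
        first_hit (D := {y | y ∈ P₁.support ∨ y ∈ P₂.support}) R0
          (Or.inl P₁.start_mem_support)
      have hT : T0.bypass.IsPath := T0.bypass_isPath
      have hTsub : T0.bypass.support ⊆ R0.support :=
        List.Subset.trans T0.support_bypass_subset hT0sub
      have hTD : ∀ y ∈ T0.bypass.support, (y ∈ P₁.support ∨ y ∈ P₂.support) → y = z :=
        fun y hy' => hT0D y (T0.support_bypass_subset hy')
      have hy₁T : y₁ ∉ T0.bypass.support := fun hh => hy₁R0 (hTsub hh)
      have hzy₁ : z ≠ y₁ := by
        intro hh; subst hh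
        exact hy₁R0 (hTsub T0.bypass.end_mem_support)
      rcases hzD with hz1 | hz2
      · exact fan_case_notmem hP₁ hP₂ hI h2 hT hz1 hTD hy₁T hzy₁
      · exact fan_case_notmem hP₂ hP₁ (fun y ha hb => hI y hb ha) h1 hT hz2
          (fun y hy' hD => hTD y hy' hD.symm) hy₁T hzy₁


lemma te_mem {x i j u : W} (hij : H.Adj i j) {A₁ : H.Walk x i} {A₂ : H.Walk x j}
    (hA₁ : A₁.IsPath) (hA₂ : A₂.IsPath)
    (hI : ∀ z ∈ A₁.support, z ∈ A₂.support → z = x)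
    (hjA : j ∉ A₁.support) (hiA : i ∉ A₂.support)
    (hu : u ∈ A₁.support) (hux : u ≠ x) :
    ∃ p : H.Walk x u, p.IsPath ∧ s(i, j) ∈ p.edges := by
  obtain ⟨q, r, hq, hr, hqs, hrs, hqr⟩ := path_split hA₁ hu
  have hxr : x ∉ r.support := fun hh => hux.symm (hqr _ q.start_mem_support hh)
  refine ⟨A₂.append (Walk.cons hij.symm r.reverse), ?_, ?_⟩
  · refine IsPath.append' hA₂ ?_ ?_
    · rw [Walk.cons_isPath_iff]
      refine ⟨hr.reverse, ?_⟩
      rw [Walk.support_reverse, List.mem_reverse]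
      exact fun hh => hjA (hrs hh)
    · intro y hy2 hyc
      rw [Walk.support_cons, List.mem_cons] at hyc
      rcases hyc with rfl | hyr
      · rfl
      · rw [Walk.support_reverse, List.mem_reverse] at hyr
        have := hI y (hrs hyr) hy2
        subst this
        exact absurd hyr hxr
  · rw [Walk.edges_append, List.mem_append]
    right
    rw [Walk.edges_cons, List.mem_cons]
    left
    exact Sym2.eq_swap

lemma te_notmem {x i j u z : W} (hij : H.Adj i j) {A₁ : H.Walk x i} {A₂ : H.Walk x j}
    (hA₁ : A₁.IsPath) (hA₂ : A₂.IsPath)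
    (hI : ∀ z' ∈ A₁.support, z' ∈ A₂.support → z' = x)
    (hjA : j ∉ A₁.support) (hiA : i ∉ A₂.support)
    {T : H.Walk u z} (hT : T.IsPath) (hz : z ∈ A₁.support)
    (hTD : ∀ y ∈ T.support, (y ∈ A₁.support ∨ y ∈ A₂.support) → y = z)
    (hxT : x ∉ T.support) (hzx : z ≠ x) :
    ∃ p : H.Walk x u, p.IsPath ∧ s(i, j) ∈ p.edges := by
  obtain ⟨q, r, hq, hr, hqs, hrs, hqr⟩ := path_split hA₁ hz
  have hxr : x ∉ r.support := fun hh => hzx.symm (hqr _ q.start_mem_support hh)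
  have hinner : (r.reverse.append T.reverse : H.Walk i u).IsPath := by
    refine IsPath.append' hr.reverse hT.reverse ?_
    intro y hyr hyT
    rw [Walk.support_reverse, List.mem_reverse] at hyr hyT
    exact hTD y hyT (Or.inl (hrs hyr))
  refine ⟨A₂.append (Walk.cons hij.symm (r.reverse.append T.reverse)), ?_, ?_⟩
  · refine IsPath.append' hA₂ ?_ ?_
    · rw [Walk.cons_isPath_iff]
      refine ⟨hinner, fun hh => ?_⟩
      rcases (Walk.mem_support_append_iff _ _).mp hh with hyr | hyT
      · rw [Walk.support_reverse, List.mem_reverse] at hyr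
        exact hjA (hrs hyr)
      · rw [Walk.support_reverse, List.mem_reverse] at hyT
        exact hjA (hTD j hyT (Or.inr A₂.end_mem_support) ▸ hz)
    · intro y hy2 hyc
      rw [Walk.support_cons, List.mem_cons] at hyc
      rcases hyc with rfl | hyin
      · rfl
      · rcases (Walk.mem_support_append_iff _ _).mp hyin with hyr | hyT
        · rw [Walk.support_reverse, List.mem_reverse] at hyr
          have := hI y (hrs hyr) hy2
          subst this
          exact absurd hyr hxr
        · rw [Walk.support_reverse, List.mem_reverse] at hyT
          have hyz := hTD y hyT (Or.inr hy2)
          subst hyz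
          exact absurd (hI y hz hy2) hzx
  · rw [Walk.edges_append, List.mem_append]
    right
    rw [Walk.edges_cons, List.mem_cons]
    left
    exact Sym2.eq_swap

lemma through_edge (hc : H.Connected) (hnc : HasNoCutVertex H) {i j x u : W}
    (hij : H.Adj i j) (hxu : x ≠ u) :
    ∃ p : H.Walk x u, p.IsPath ∧ s(i, j) ∈ p.edges := by
  classical
  by_cases hxi : x = i
  · subst hxi
    by_cases huj : u = j
    · subst huj
      exact ⟨Walk.cons hij Walk.nil, by simp [Walk.isPath_def, hij.ne], by simp⟩
    · obtain ⟨p, hp, hip⟩ := avoid_path (hnc x) hij.ne' (fun hh => hxu hh.symm)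
      exact ⟨Walk.cons hij p, by rw [Walk.cons_isPath_iff]; exact ⟨hp, hip⟩, by simp⟩
  · by_cases hxj : x = j
    · subst hxj
      by_cases hui : u = i
      · subst hui
        refine ⟨Walk.cons hij.symm Walk.nil, by simp [Walk.isPath_def, hij.ne'], ?_⟩
        simp [Sym2.eq_swap]
      · obtain ⟨p, hp, hjp⟩ := avoid_path (hnc x) hij.ne (fun hh => hxu hh.symm)
        refine ⟨Walk.cons hij.symm p, by rw [Walk.cons_isPath_iff]; exact ⟨hp, hjp⟩, ?_⟩
        rw [Walk.edges_cons, List.mem_cons]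
        left
        exact Sym2.eq_swap
    · by_cases hui : u = i
      · subst hui
        obtain ⟨p, hp, hip⟩ := avoid_path (hnc u) hxi hij.ne'
        refine ⟨p.append (Walk.cons hij.symm Walk.nil), ?_, ?_⟩
        · refine IsPath.append' hp (by simp [Walk.isPath_def, hij.ne']) ?_
          intro y hy hyc
          simp only [Walk.support_cons, Walk.support_nil, List.mem_cons,
            List.mem_singleton] at hyc
          rcases hyc with rfl | rfl | hh
          · rfl
          · exact absurd hy hip
          · exact absurd hh (by simp)
        · rw [Walk.edges_append, List.mem_append]
          right
          simp [Sym2.eq_swap]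
      · by_cases huj : u = j
        · subst huj
          obtain ⟨p, hp, hjp⟩ := avoid_path (hnc u) hxj hij.ne
          refine ⟨p.append (Walk.cons hij Walk.nil), ?_, ?_⟩
          · refine IsPath.append' hp (by simp [Walk.isPath_def, hij.ne]) ?_
            intro y hy hyc
            simp only [Walk.support_cons, Walk.support_nil, List.mem_cons,
              List.mem_singleton] at hyc
            rcases hyc with rfl | rfl | hh
            · rfl
            · exact absurd hy hjp
            · exact absurd hh (by simp)
          · rw [Walk.edges_append, List.mem_append]
            right
            simp
        · -- generic case: x, u, i, j pairwise distinct
          obtain ⟨A₁, A₂, hA₁, hA₂, hmeet, hjA, hiA⟩ := fan hc hnc hxi hxj hij.ne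
          by_cases hu1 : u ∈ A₁.support
          · exact te_mem hij hA₁ hA₂ hmeet hjA hiA hu1 (Ne.symm hxu)
          · by_cases hu2 : u ∈ A₂.support
            · obtain ⟨p, hp, he⟩ := te_mem hij.symm hA₂ hA₁
                (fun z h2 h1 => hmeet z h1 h2) hiA hjA hu2 (Ne.symm hxu)
              exact ⟨p, hp, by rwa [Sym2.eq_swap] at he⟩
            · obtain ⟨R0, hR0, hxR0⟩ := avoid_path (hnc x) (Ne.symm hxu) (Ne.symm hxi)
              obtain ⟨z, hzD, T0, hT0sub, hT0D⟩ :=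
                first_hit (D := {y | y ∈ A₁.support ∨ y ∈ A₂.support}) R0
                  (Or.inl A₁.end_mem_support)
              have hT : T0.bypass.IsPath := T0.bypass_isPath
              have hTsub : T0.bypass.support ⊆ R0.support :=
                List.Subset.trans T0.support_bypass_subset hT0sub
              have hTD : ∀ y ∈ T0.bypass.support,
                  (y ∈ A₁.support ∨ y ∈ A₂.support) → y = z :=
                fun y hy' => hT0D y (T0.support_bypass_subset hy')
              have hxT : x ∉ T0.bypass.support := fun hh => hxR0 (hTsub hh)
              have hzx : z ≠ x := by
                intro hh; subst hh
                exact hxR0 (hTsub T0.bypass.end_mem_support)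
              rcases hzD with hz1 | hz2
              · exact te_notmem hij hA₁ hA₂ hmeet hjA hiA hT hz1 hTD hxT hzx
              · obtain ⟨p, hp, he⟩ := te_notmem hij.symm hA₂ hA₁
                  (fun z' h2 h1 => hmeet z' h1 h2) hiA hjA hT hz2
                  (fun y hy' hD => hTD y hy' hD.symm) hxT hzx
                exact ⟨p, hp, by rwa [Sym2.eq_swap] at he⟩

end PTB

/-- path-through-a-block lemma. Let `G` be a connected graph, `S` a block of
`G` that is 2-connected (at least three vertices), `(i, j)` an edge of the block, `u` a vertex
of the block that is not a cut vertex of `G`, and `v` a vertex of `G` outside the block. Then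
there is a simple path in `G` from `v` to `u` containing the edge `(i, j)`. -/



theorem path_through_block {V : Type*} [Fintype V]
    (G : SimpleGraph V) (hG : G.Connected)
    (S : Set V) (hS : IsVertexBlock G S) (h2 : 3 ≤ S.ncard)
    (i j : V) (hij : G.Adj i j) (hiS : i ∈ S) (hjS : j ∈ S)
    (u : V) (huS : u ∈ S) (hu : ¬ IsCutVertex G u)
    (v : V) (hv : v ∉ S) :
    ∃ w : G.Walk v u, w.IsPath ∧ s(i, j) ∈ w.edges := by
  classical
  obtain ⟨hconn, hncv, -⟩ := hS
  have ht : ∃ t, t ∈ S ∧ t ≠ u := by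
    by_contra h
    push_neg at h
    have hsub : S ⊆ {u} := fun t htS => h t htS
    have hle := Set.ncard_le_ncard hsub (Set.finite_singleton u)
    rw [Set.ncard_singleton] at hle
    omega
  obtain ⟨t, htS, htu⟩ := ht
  have hvu : v ≠ u := fun h => hv (h ▸ huS)
  obtain ⟨p, hp, hup⟩ := PTB.avoid_path hu hvu htu
  obtain ⟨x, hxS, q0, hq0sub, hq0D⟩ := PTB.first_hit (D := S) p htS
  have hq : q0.bypass.IsPath := q0.bypass_isPath
  have hqsub : q0.bypass.support ⊆ p.support := List.Subset.trans q0.support_bypass_subset hq0sub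
  have hxu : x ≠ u := fun h => hup (h ▸ hqsub q0.bypass.end_mem_support)
  have hqS : ∀ y ∈ q0.bypass.support, y ∈ S → y = x :=
    fun y hy => hq0D y (q0.support_bypass_subset hy)
  have hij' : (G.induce S).Adj ⟨i, hiS⟩ ⟨j, hjS⟩ := hij
  have hx'u' : (⟨x, hxS⟩ : S) ≠ ⟨u, huS⟩ := fun h => hxu (congrArg Subtype.val h)
  obtain ⟨P, hP, hPe⟩ := PTB.through_edge hconn hncv hij' hx'u'
  let P' : G.Walk x u := P.map (SimpleGraph.Embedding.induce S).toHom
  have hP' : P'.IsPath :=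
    SimpleGraph.Walk.map_isPath_of_injective (SimpleGraph.Embedding.induce (G := G) S).injective hP
  have hP's : ∀ y ∈ P'.support, y ∈ S := by
    intro y hy
    have hy' : y ∈ (P.map (SimpleGraph.Embedding.induce (G := G) S).toHom).support := hy
    rw [SimpleGraph.Walk.support_map] at hy'
    obtain ⟨s, hs, hsy⟩ := List.mem_map.mp hy'
    cases hsy
    exact s.2
  have hedge : s(i, j) ∈ P'.edges := by
    show s(i, j) ∈ (P.map (SimpleGraph.Embedding.induce (G := G) S).toHom).edges
    rw [SimpleGraph.Walk.edges_map]
    exact List.mem_map.mpr ⟨s(⟨i, hiS⟩, ⟨j, hjS⟩), hPe, rfl⟩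
  refine ⟨q0.bypass.append P', PTB.IsPath.append' hq hP' ?_, ?_⟩
  · intro z hz hz'
    exact hqS z hz (hP's z hz')
  · rw [SimpleGraph.Walk.edges_append, List.mem_append]
    right
    exact hedge
end

section
/- Path-to-spanning-2-forest lemma: let G be a connected graph and suppose there is a simple path in G from ĵ to k that contains the edge l = (i,j), traversed so that the path visits ĵ, then j, then i, then k in this order. Then G has a spanning forest H not containing the edge l and consisting of exactly two trees, one of which contains both i and k and the other of which contains both j and ĵ. -/
open SimpleGraph in
private lemma reach_sup_edge {V : Type*} {H : SimpleGraph V} {a b : V} (hab : ¬ H.Reachable a b)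
    {x y : V} (h : (H ⊔ SimpleGraph.fromEdgeSet {s(a,b)}).Reachable x y) :
    H.Reachable x y ∨ (H.Reachable x a ∧ H.Reachable b y) ∨
      (H.Reachable x b ∧ H.Reachable a y) := by
  obtain ⟨w⟩ := h
  induction w with
  | nil => exact Or.inl (Reachable.refl _)
  | @cons u z y h p ih =>
    rcases (sup_adj _ _ _ _).mp h with h' | h'
    · have hr : H.Reachable u z := h'.reachable
      rcases ih with r | ⟨r1, r2⟩ | ⟨r1, r2⟩
      · exact Or.inl (hr.trans r)
      · exact Or.inr (Or.inl ⟨hr.trans r1, r2⟩)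
      · exact Or.inr (Or.inr ⟨hr.trans r1, r2⟩)
    · rw [fromEdgeSet_adj] at h'
      obtain ⟨hm, hne⟩ := h'
      simp only [Set.mem_singleton_iff, Sym2.eq, Sym2.rel_iff', Prod.mk.injEq,
        Prod.swap_prod_mk] at hm
      rcases hm with ⟨rfl, rfl⟩ | ⟨rfl, rfl⟩
      · rcases ih with r | ⟨r1, r2⟩ | ⟨r1, r2⟩
        · exact Or.inr (Or.inl ⟨Reachable.refl _, r⟩)
        · exact absurd r1.symm hab
        · exact Or.inl r2
      · rcases ih with r | ⟨r1, r2⟩ | ⟨r1, r2⟩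
        · exact Or.inr (Or.inr ⟨Reachable.refl _, r⟩)
        · exact Or.inl r2
        · exact absurd r1 hab

open SimpleGraph in
private lemma acyclic_sup_edge {V : Type*} {H : SimpleGraph V} (hH : H.IsAcyclic) {a b : V}
    (hab : ¬ H.Reachable a b) :
    (H ⊔ SimpleGraph.fromEdgeSet {s(a,b)}).IsAcyclic := by
  rw [isAcyclic_iff_forall_adj_isBridge]
  intro x y hxy
  rcases (sup_adj _ _ _ _).mp hxy with h' | h'
  · have hnab : s(x,y) ≠ s(a,b) := by
      intro heq
      rw [Sym2.eq_iff] at heq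
      rcases heq with ⟨rfl, rfl⟩ | ⟨rfl, rfl⟩
      · exact hab h'.reachable
      · exact hab h'.symm.reachable
    have hb : ¬ (H \ SimpleGraph.fromEdgeSet {s(x,y)}).Reachable x y :=
      fun r => (isAcyclic_iff_forall_adj_isBridge.mp hH) h' r
    show ((H ⊔ SimpleGraph.fromEdgeSet {s(a,b)}) \ SimpleGraph.fromEdgeSet {s(x,y)}).Reachable x y → False
    intro hr
    have heq : (H ⊔ SimpleGraph.fromEdgeSet {s(a,b)}) \ SimpleGraph.fromEdgeSet {s(x,y)}
        = (H \ SimpleGraph.fromEdgeSet {s(x,y)}) ⊔ SimpleGraph.fromEdgeSet {s(a,b)} := by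
      ext u v
      simp only [sdiff_adj, sup_adj, fromEdgeSet_adj, Set.mem_singleton_iff]
      constructor
      · rintro ⟨h1 | h1, h2⟩
        · exact Or.inl ⟨h1, h2⟩
        · exact Or.inr h1
      · rintro (⟨h1, h2⟩ | h1)
        · exact ⟨Or.inl h1, h2⟩
        · refine ⟨Or.inr h1, ?_⟩
          rintro ⟨h2, -⟩
          exact hnab (h2.symm.trans h1.1)
    rw [heq] at hr
    have hab' : ¬ (H \ SimpleGraph.fromEdgeSet {s(x,y)}).Reachable a b := fun r =>
      hab (r.mono sdiff_le)
    rcases reach_sup_edge hab' hr with r | ⟨r1, r2⟩ | ⟨r1, r2⟩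
    · exact hb r
    · exact hab ((((r1.mono sdiff_le).symm.trans h'.reachable).trans
        (r2.mono sdiff_le).symm).symm.symm)
    · exact hab (((r2.mono sdiff_le).trans h'.symm.reachable).trans (r1.mono sdiff_le))
  · rw [fromEdgeSet_adj, Set.mem_singleton_iff] at h'
    show ((H ⊔ SimpleGraph.fromEdgeSet {s(a,b)}) \ SimpleGraph.fromEdgeSet {s(x,y)}).Reachable x y → False
    intro hr
    have hle : (H ⊔ SimpleGraph.fromEdgeSet {s(a,b)}) \ SimpleGraph.fromEdgeSet {s(x,y)} ≤ H := by
      intro u v huv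
      rw [sdiff_adj, sup_adj, fromEdgeSet_adj] at huv
      obtain ⟨h1 | h1, h2⟩ := huv
      · exact h1
      · exact absurd ⟨h'.1 ▸ h1.1, h1.2⟩ h2
    have := hr.mono hle
    rw [Sym2.eq_iff] at h'
    rcases h'.1 with ⟨rfl, rfl⟩ | ⟨rfl, rfl⟩
    · exact hab this
    · exact hab this.symm

private lemma isAcyclic_anti {V : Type*} {H K : SimpleGraph V} (h : H ≤ K) (hK : K.IsAcyclic) :
    H.IsAcyclic :=
  fun _ c hc => hK (c.mapLe h) ((SimpleGraph.Walk.mapLe_isCycle h).mpr hc)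

private lemma spanningCoe_adj_support {V : Type*} {G : SimpleGraph V} {u v : V} (q : G.Walk u v)
    {x y : V} (h : q.toSubgraph.spanningCoe.Adj x y) : x ∈ q.support :=
  (q.mem_verts_toSubgraph).mp (SimpleGraph.Subgraph.Adj.fst_mem h)

open SimpleGraph in
private lemma toSubgraph_spanningCoe_reachable {V : Type*} {G : SimpleGraph V} {u v : V}
    (q : G.Walk u v) : q.toSubgraph.spanningCoe.Reachable u v := by
  induction q with
  | nil => exact Reachable.refl _
  | @cons a c b h p ih =>
    have hadj : (SimpleGraph.Walk.cons h p).toSubgraph.spanningCoe.Adj a c := by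
      show ((G.subgraphOfAdj h) ⊔ p.toSubgraph).Adj a c
      exact Or.inl (by simp)
    exact hadj.reachable.trans
      (ih.mono (SimpleGraph.Subgraph.spanningCoe_le_of_le le_sup_right))

private lemma not_reach_of_not_mem_support {V : Type*} {G : SimpleGraph V} {u v : V}
    (q : G.Walk u v) {x y : V} (hx : x ∉ q.support) (hxy : x ≠ y) :
    ¬ q.toSubgraph.spanningCoe.Reachable x y := by
  intro h
  obtain ⟨w⟩ := h
  cases w with
  | nil => exact hxy rfl
  | cons h p => exact hx (spanningCoe_adj_support _ h)

open SimpleGraph in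
private lemma path_toSubgraph_acyclic {V : Type*} {G : SimpleGraph V} {u v : V}
    (q : G.Walk u v) (hq : q.IsPath) : q.toSubgraph.spanningCoe.IsAcyclic := by
  induction q with
  | nil =>
    refine isAcyclic_anti (fun x y h => ?_) isAcyclic_bot
    simp [SimpleGraph.Walk.toSubgraph, SimpleGraph.singletonSubgraph] at h
  | @cons a c b h p ih =>
    rw [SimpleGraph.Walk.cons_isPath_iff] at hq
    have heq : (SimpleGraph.Walk.cons h p).toSubgraph.spanningCoe
        = p.toSubgraph.spanningCoe ⊔ SimpleGraph.fromEdgeSet {s(a,c)} := by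
      ext x y
      show ((G.subgraphOfAdj h) ⊔ p.toSubgraph).Adj x y ↔ _
      rw [SimpleGraph.Subgraph.sup_adj, SimpleGraph.sup_adj, SimpleGraph.fromEdgeSet_adj,
        SimpleGraph.subgraphOfAdj_adj, Set.mem_singleton_iff]
      constructor
      · rintro (h1 | h1)
        · refine Or.inr ⟨h1.symm, ?_⟩
          rw [Sym2.eq_iff] at h1
          rcases h1 with ⟨rfl, rfl⟩ | ⟨rfl, rfl⟩
          · exact h.ne
          · exact h.ne'
        · exact Or.inl h1
      · rintro (h1 | ⟨h1, -⟩)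
        · exact Or.inr h1
        · exact Or.inl h1.symm
    rw [heq]
    exact acyclic_sup_edge (ih hq.1) (not_reach_of_not_mem_support p hq.2 h.ne)

/-- path-to-spanning-2-forest lemma. Let `G` be a connected graph and suppose
there is a simple path from `jhat` to `k` containing the edge `(i, j)`, traversed so that it
visits `jhat`, then `j`, then `i`, then `k` in this order (encoded as a path of the form
`w₁ : jhat → j`, then the edge `(j, i)`, then `w₂ : i → k`). Then `G` has a spanning forest `H`
not containing the edge `(i, j)` and consisting of exactly two trees, one containing both `i`
and `k` and the other containing both `j` and `jhat`. -/
theorem path_to_spanning_two_forest {V : Type*} [Fintype V]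
    (G : SimpleGraph V) (hG : G.Connected)
    (jhat j i k : V) (hij : G.Adj i j)
    (w₁ : G.Walk jhat j) (w₂ : G.Walk i k)
    (hpath : (w₁.append (SimpleGraph.Walk.cons hij.symm w₂)).IsPath) :
    ∃ H : SimpleGraph V, H ≤ G ∧ H.IsAcyclic ∧ ¬ H.Adj i j ∧
      H.Reachable i k ∧ H.Reachable j jhat ∧ ¬ H.Reachable i j ∧
      ∀ v : V, H.Reachable v i ∨ H.Reachable v j := by
  classical
  haveI : Finite (SimpleGraph V) := Finite.of_fintype _
  set A := w₁.toSubgraph.spanningCoe with hA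
  set B := w₂.toSubgraph.spanningCoe with hB
  -- disjointness of supports
  have hnd := hpath.support_nodup
  have hsup : (w₁.append (SimpleGraph.Walk.cons hij.symm w₂)).support
      = w₁.support ++ w₂.support := by
    rw [SimpleGraph.Walk.support_append]
    rfl
  rw [hsup] at hnd
  have hdisj : ∀ v : V, v ∈ w₁.support → v ∈ w₂.support → False := by
    have h := List.disjoint_of_nodup_append hnd
    exact fun v h1 h2 => h h1 h2
  -- seed graph properties
  have hseed_le : A ⊔ B ≤ G :=
    sup_le (SimpleGraph.Subgraph.spanningCoe_le _) (SimpleGraph.Subgraph.spanningCoe_le _)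
  have hseed_ac : (A ⊔ B).IsAcyclic := by
    refine isAcyclic_anti (sup_le ?_ ?_) (path_toSubgraph_acyclic _ hpath)
    · exact SimpleGraph.Subgraph.spanningCoe_le_of_le
        (by rw [SimpleGraph.Walk.toSubgraph_append]; exact le_sup_left)
    · refine SimpleGraph.Subgraph.spanningCoe_le_of_le ?_
      rw [SimpleGraph.Walk.toSubgraph_append]
      exact le_sup_of_le_right le_sup_right
  have key : ∀ {x y : V} (w : (A ⊔ B).Walk x y), x ∈ w₂.support → y ∈ w₂.support := by
    intro x y w
    induction w with
    | nil => exact id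
    | @cons u z _ h p ih =>
      intro hx
      rcases (SimpleGraph.sup_adj _ _ _ _).mp h with h' | h'
      · exact absurd (spanningCoe_adj_support w₁ h') (fun hm => hdisj _ hm hx)
      · exact ih (spanningCoe_adj_support w₂ h'.symm)
  have hnr : ¬ (A ⊔ B).Reachable i j := by
    intro h
    exact hdisj j (SimpleGraph.Walk.end_mem_support w₁)
      (key h.some (SimpleGraph.Walk.start_mem_support w₂))
  have hAik : (A ⊔ B).Reachable i k := (toSubgraph_spanningCoe_reachable w₂).mono le_sup_right
  have hAjj : (A ⊔ B).Reachable j jhat :=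
    ((toSubgraph_spanningCoe_reachable w₁).mono le_sup_left).symm
  -- take a maximal acyclic H above the seed with i, j not connected
  obtain ⟨H, hle, hmax⟩ := Finite.exists_le_maximal
    (p := fun H : SimpleGraph V => H ≤ G ∧ H.IsAcyclic ∧ ¬ H.Reachable i j)
    (a := A ⊔ B) ⟨hseed_le, hseed_ac, hnr⟩
  have hprop : H ≤ G ∧ H.IsAcyclic ∧ ¬ H.Reachable i j := hmax.1
  obtain ⟨hHG, hHac, hHnr⟩ := hprop
  have main : ∀ (x y : V) (W : G.Walk x y),
      (H.Reachable y i ∨ H.Reachable y j) → (H.Reachable x i ∨ H.Reachable x j) := by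
    intro x y W
    induction W with
    | nil => exact id
    | @cons x z _ hadj p ih =>
      intro hy
      have ihz := ih hy
      by_cases hxz : H.Reachable x z
      · rcases ihz with r | r
        · exact Or.inl (hxz.trans r)
        · exact Or.inr (hxz.trans r)
      · by_contra hcon
        push_neg at hcon
        obtain ⟨hxi, hxj⟩ := hcon
        have hH'G : H ⊔ SimpleGraph.fromEdgeSet {s(x,z)} ≤ G := by
          refine sup_le hHG ?_
          intro u v huv
          rw [SimpleGraph.fromEdgeSet_adj, Set.mem_singleton_iff] at huv
          rcases Sym2.eq_iff.mp huv.1 with ⟨rfl, rfl⟩ | ⟨rfl, rfl⟩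
          · exact hadj
          · exact hadj.symm
        have hH'ac := acyclic_sup_edge hHac hxz
        have hH'nr : ¬ (H ⊔ SimpleGraph.fromEdgeSet {s(x,z)}).Reachable i j := by
          intro hr
          rcases reach_sup_edge hxz hr with r | ⟨r1, r2⟩ | ⟨r1, r2⟩
          · exact hHnr r
          · exact hxi r1.symm
          · exact hxj r2
        have heqH : H = H ⊔ SimpleGraph.fromEdgeSet {s(x,z)} :=
          hmax.eq_of_le ⟨hH'G, hH'ac, hH'nr⟩ le_sup_left
        have hadjH : H.Adj x z := by
          rw [heqH, SimpleGraph.sup_adj]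
          exact Or.inr ((SimpleGraph.fromEdgeSet_adj _).mpr ⟨rfl, hadj.ne⟩)
        exact hxz hadjH.reachable
  exact ⟨H, hHG, hHac, fun h => hHnr h.reachable, hAik.mono hle, hAjj.mono hle, hHnr,
    fun v => main v i ((hG.preconnected v i).some) (Or.inl (SimpleGraph.Reachable.refl i))⟩
end

section
/- Equivalence of the two GLODF representations: if the matrix I − B_F C_F^T A C_F is invertible, then B_{−F} C_{−F}^T A_{−F} C_F = B_{−F} C_{−F}^T A C_F (I − B_F C_F^T A C_F)^{−1}; that is, the generalized line outage distribution factor matrix K^F computed from the post-contingency matrix A_{−F} coincides with its expression in terms of the pre-contingency matrix A. -/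
open Matrix MeasureTheory

variable {n m : ℕ}

/-! ### Auxiliary machinery -/

section GlodfAux

/-- The `(n+1) × n` matrix of the inclusion `Fin n → Fin (n+1)` via `castSucc`. -/
def Jmat (n : ℕ) : Matrix (Fin (n+1)) (Fin n) ℝ :=
  Matrix.of fun i j => if i = Fin.castSucc j then 1 else 0

lemma Jt_mul {α : Type*} [Fintype α] (X : Matrix (Fin (n+1)) α ℝ) :
    (Jmat n)ᵀ * X = X.submatrix Fin.castSucc id := by
  ext a k
  simp [Jmat, Matrix.mul_apply]

lemma mul_J {α : Type*} [Fintype α] (X : Matrix α (Fin (n+1)) ℝ) :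
    X * Jmat n = X.submatrix id Fin.castSucc := by
  ext a k
  simp [Jmat, Matrix.mul_apply]

lemma J_mul_mul_Jt (Y : Matrix (Fin n) (Fin n) ℝ) :
    Jmat n * Y * (Jmat n)ᵀ = Matrix.of fun i j =>
      if h : i ≠ Fin.last n ∧ j ≠ Fin.last n then Y (i.castPred h.1) (j.castPred h.2) else 0 := by
  ext i j
  simp only [Matrix.mul_apply, Jmat, Matrix.transpose_apply, Matrix.of_apply, ite_mul, one_mul,
    zero_mul, mul_ite, mul_one, mul_zero, Finset.sum_ite_eq]
  by_cases hi : i = Fin.last n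
  · subst hi
    have : ∀ a : Fin n, Fin.last n ≠ Fin.castSucc a := fun a => (Fin.castSucc_lt_last a).ne'
    simp [this]
  · by_cases hj : j = Fin.last n
    · subst hj
      have : ∀ a : Fin n, Fin.last n ≠ Fin.castSucc a := fun a => (Fin.castSucc_lt_last a).ne'
      simp [this, hi]
    · obtain ⟨a, rfl⟩ := Fin.exists_castSucc_eq.mpr hi
      obtain ⟨c, rfl⟩ := Fin.exists_castSucc_eq.mpr hj
      simp [Fin.castSucc_inj, hi, hj]

lemma AmatL_eq (L : Matrix (Fin (n+1)) (Fin (n+1)) ℝ) :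
    AmatL L = Jmat n * (L.submatrix Fin.castSucc Fin.castSucc)⁻¹ * (Jmat n)ᵀ := by
  rw [J_mul_mul_Jt]; rfl

lemma eq_of_reachable {V : Type*} {G : SimpleGraph V} {f : V → ℝ}
    (h : ∀ a c, G.Adj a c → f a = f c) {u v : V} (hr : G.Reachable u v) : f u = f v := by
  obtain ⟨p⟩ := hr
  induction p with
  | nil => rfl
  | cons ha _ ih => exact (h _ _ ha).trans ih

lemma quad_form (src tgt : Fin m → Fin (n+1)) (hsl : ∀ l, src l ≠ tgt l) (w : Fin m → ℝ)
    (y : Fin (n+1) → ℝ) :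
    y ⬝ᵥ (incM src tgt * Matrix.diagonal w * (incM src tgt)ᵀ) *ᵥ y
      = ∑ l, w l * (y (src l) - y (tgt l))^2 := by
  have hg : ∀ l, (∑ i, y i * incM src tgt i l) = y (src l) - y (tgt l) := by
    intro l
    have : ∀ i, y i * incM src tgt i l
        = (if src l = i then y i else 0) - (if tgt l = i then y i else 0) := by
      intro i
      simp only [incM, Matrix.of_apply]
      split_ifs with h1 h2
      · exact absurd (h1.trans h2.symm) (hsl l)
      · ring
      · ring
      · ring
    simp [this, Finset.sum_sub_distrib]
  have hCt : (incM src tgt)ᵀ *ᵥ y = fun l => y (src l) - y (tgt l) := by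
    ext l
    simpa [Matrix.mulVec, dotProduct, mul_comm] using hg l
  have hvm : vecMul y (incM src tgt) = fun l => y (src l) - y (tgt l) := by
    ext l
    simpa [Matrix.vecMul, dotProduct] using hg l
  rw [← Matrix.mulVec_mulVec, ← Matrix.mulVec_mulVec, hCt, Matrix.dotProduct_mulVec, hvm]
  simp [dotProduct, Matrix.mulVec_diagonal]
  exact Finset.sum_congr rfl fun l _ => by ring

lemma quad_sub (L : Matrix (Fin (n+1)) (Fin (n+1)) ℝ) (x : Fin n → ℝ) :
    x ⬝ᵥ (L.submatrix Fin.castSucc Fin.castSucc) *ᵥ x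
      = (Fin.snoc x 0 : Fin (n+1) → ℝ) ⬝ᵥ L *ᵥ (Fin.snoc x 0 : Fin (n+1) → ℝ) := by
  simp [dotProduct, Matrix.mulVec, Fin.sum_univ_castSucc]

lemma reduced_posDef (src tgt : Fin m → Fin (n+1)) (hsl : ∀ l, src l ≠ tgt l)
    (w : Fin m → ℝ) (hw : ∀ l, 0 ≤ w l)
    (hconn : (netGraphOn src tgt {l | 0 < w l}).Connected) :
    ((incM src tgt * Matrix.diagonal w * (incM src tgt)ᵀ).submatrix
      Fin.castSucc Fin.castSucc).PosDef := by
  rw [Matrix.posDef_iff_dotProduct_mulVec]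
  constructor
  · -- Hermitian
    have hs : (incM src tgt * Matrix.diagonal w * (incM src tgt)ᵀ)ᵀ
        = incM src tgt * Matrix.diagonal w * (incM src tgt)ᵀ := by
      rw [Matrix.transpose_mul, Matrix.transpose_mul, Matrix.transpose_transpose,
        Matrix.diagonal_transpose, Matrix.mul_assoc]
    show _ᴴ = _
    ext i j
    have := congrFun (congrFun hs (Fin.castSucc j)) (Fin.castSucc i)
    simpa [Matrix.conjTranspose_apply, Matrix.transpose_apply] using this.symm ▸ rfl
  · intro x hx
    have key : x ⬝ᵥ ((incM src tgt * Matrix.diagonal w * (incM src tgt)ᵀ).submatrix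
        Fin.castSucc Fin.castSucc) *ᵥ x
        = ∑ l, w l * ((Fin.snoc x 0 : Fin (n+1) → ℝ) (src l)
            - (Fin.snoc x 0 : Fin (n+1) → ℝ) (tgt l))^2 := by
      rw [quad_sub, quad_form src tgt hsl]
    have hnonneg : ∀ l ∈ Finset.univ, (0:ℝ) ≤ w l * ((Fin.snoc x 0 : Fin (n+1) → ℝ) (src l)
        - (Fin.snoc x 0 : Fin (n+1) → ℝ) (tgt l))^2 :=
      fun l _ => mul_nonneg (hw l) (sq_nonneg _)
    show 0 < star x ⬝ᵥ _
    rw [show (star x : Fin n → ℝ) = x from rfl, key]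
    rcases (Finset.sum_nonneg hnonneg).lt_or_eq with h | h
    · exact h
    · exfalso
      set y : Fin (n+1) → ℝ := Fin.snoc x 0 with hy
      have hterm : ∀ l, 0 < w l → y (src l) = y (tgt l) := by
        intro l hl
        have := (Finset.sum_eq_zero_iff_of_nonneg hnonneg).mp h.symm l (Finset.mem_univ l)
        have h2 : (y (src l) - y (tgt l))^2 = 0 := by
          rcases mul_eq_zero.mp this with h3 | h3
          · exact absurd h3 hl.ne'
          · exact h3
        have := pow_eq_zero_iff (n := 2) (by norm_num) |>.mp h2
        linarith [sub_eq_zero.mp this]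
      have hadj : ∀ a c, (netGraphOn src tgt {l | 0 < w l}).Adj a c → y a = y c := by
        intro a c hac
        rw [netGraphOn, SimpleGraph.fromRel_adj] at hac
        rcases hac.2 with ⟨l, hl, h1, h2⟩ | ⟨l, hl, h1, h2⟩
        · rw [← h1, ← h2]; exact hterm l hl
        · rw [← h1, ← h2]; exact (hterm l hl).symm
      apply hx
      funext i
      have : y (Fin.castSucc i) = y (Fin.last n) :=
        eq_of_reachable hadj (hconn.preconnected _ _)
      simpa [hy, Fin.snoc_castSucc, Fin.snoc_last] using this

lemma mulDiagMulT (X Y : Matrix (Fin (n+1)) (Fin m) ℝ) (d : Fin m → ℝ) (i j : Fin (n+1)) :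
    (X * Matrix.diagonal d * Yᵀ) i j = ∑ l, X i l * d l * Y j l := by
  rw [Matrix.mul_assoc, Matrix.mul_apply]
  refine Finset.sum_congr rfl fun l _ => ?_
  rw [Matrix.diagonal_mul, Matrix.transpose_apply]
  ring

lemma CF_split (src tgt : Fin m → Fin (n+1)) (b : Fin m → ℝ) (F : Finset (Fin m)) :
    CFmat src tgt F * BFmat b F * (CFmat src tgt F)ᵀ
      = incM src tgt * Matrix.diagonal (maskIn F b) * (incM src tgt)ᵀ := by
  ext i j
  rw [BFmat, mulDiagMulT, mulDiagMulT]
  refine Finset.sum_congr rfl fun l _ => ?_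
  simp only [CFmat, Matrix.of_apply, maskIn]
  split_ifs <;> ring

lemma CmF_split (src tgt : Fin m → Fin (n+1)) (b : Fin m → ℝ) (F : Finset (Fin m)) :
    CmFmat src tgt F * BmFmat b F * (CmFmat src tgt F)ᵀ
      = incM src tgt * Matrix.diagonal (maskOut F b) * (incM src tgt)ᵀ := by
  ext i j
  rw [BmFmat, mulDiagMulT, mulDiagMulT]
  refine Finset.sum_congr rfl fun l _ => ?_
  simp only [CmFmat, Matrix.of_apply, maskOut]
  split_ifs <;> ring

lemma lap_split (src tgt : Fin m → Fin (n+1)) (b : Fin m → ℝ) (F : Finset (Fin m)) :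
    incM src tgt * Matrix.diagonal b * (incM src tgt)ᵀ
      = incM src tgt * Matrix.diagonal (maskIn F b) * (incM src tgt)ᵀ
        + incM src tgt * Matrix.diagonal (maskOut F b) * (incM src tgt)ᵀ := by
  have : Matrix.diagonal b = Matrix.diagonal (maskIn F b) + Matrix.diagonal (maskOut F b) := by
    ext i j
    simp only [Matrix.diagonal_apply, maskIn, maskOut, Matrix.add_apply]
    split_ifs <;> ring
  rw [this, Matrix.mul_add, Matrix.add_mul]

end GlodfAux

/-- equivalence of the two GLODF representations. If `I − B_F C_Fᵀ A C_F`
is invertible, then the GLODF computed from the post-contingency matrix `A_{−F}` coincides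
with its expression in terms of the pre-contingency matrix `A`:
`B_{−F} C_{−F}ᵀ A_{−F} C_F = B_{−F} C_{−F}ᵀ A C_F (I − B_F C_Fᵀ A C_F)⁻¹`. -/
theorem glodf_representations_agree
    {n m : ℕ} (src tgt : Fin m → Fin (n+1)) (hsl : ∀ l, src l ≠ tgt l)
    (b : Fin m → ℝ) (hb : ∀ l, 0 < b l)
    (F : Finset (Fin m))
    (hconnPre : (netGraph src tgt).Connected)
    (hconnPost : (netGraphOn src tgt {l | l ∉ F}).Connected)
    (hinv : IsUnit (1 - BFmat b F * (CFmat src tgt F)ᵀ * Amat src tgt b * CFmat src tgt F)) :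
    BmFmat b F * (CmFmat src tgt F)ᵀ * AmFmat src tgt b F * CFmat src tgt F =
      BmFmat b F * (CmFmat src tgt F)ᵀ * Amat src tgt b * CFmat src tgt F *
        (1 - BFmat b F * (CFmat src tgt F)ᵀ * Amat src tgt b * CFmat src tgt F)⁻¹ := by
  classical
  have hc1 : (netGraphOn src tgt {l | 0 < b l}).Connected := by
    have hg : netGraphOn src tgt {l | 0 < b l} = netGraph src tgt := by
      unfold netGraphOn netGraph
      congr 1
      funext a c
      exact propext ⟨fun ⟨l, _, h⟩ => ⟨l, h⟩, fun ⟨l, h⟩ => ⟨l, hb l, h⟩⟩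
    rw [hg]; exact hconnPre
  have hc2 : (netGraphOn src tgt {l | 0 < maskOut F b l}).Connected := by
    have hs : {l | 0 < maskOut F b l} = {l | l ∉ F} := by
      ext l
      simp only [Set.mem_setOf_eq, maskOut]
      split_ifs with h <;> simp [h, hb l]
    rw [hs]; exact hconnPost
  set M := ((incM src tgt * Matrix.diagonal b * (incM src tgt)ᵀ).submatrix
    Fin.castSucc Fin.castSucc) with hMdef
  set M' := ((incM src tgt * Matrix.diagonal (maskOut F b) * (incM src tgt)ᵀ).submatrix
    Fin.castSucc Fin.castSucc) with hM'def
  have hMdet : IsUnit M.det :=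
    (reduced_posDef src tgt hsl b (fun l => (hb l).le) hc1).det_pos.ne'.isUnit
  have hM'det : IsUnit M'.det := by
    refine (reduced_posDef src tgt hsl (maskOut F b) (fun l => ?_) hc2).det_pos.ne'.isUnit
    unfold maskOut
    split_ifs
    · exact le_refl 0
    · exact (hb l).le
  have hA : Amat src tgt b = Jmat n * M⁻¹ * (Jmat n)ᵀ := AmatL_eq _
  have hA' : AmFmat src tgt b F = Jmat n * M'⁻¹ * (Jmat n)ᵀ := by
    unfold AmFmat
    rw [CmF_split]
    exact AmatL_eq _
  have hD : (Jmat n)ᵀ * (CFmat src tgt F * BFmat b F * (CFmat src tgt F)ᵀ) * Jmat n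
      = M - M' := by
    rw [CF_split src tgt b F]
    have h1 : incM src tgt * Matrix.diagonal (maskIn F b) * (incM src tgt)ᵀ
        = incM src tgt * Matrix.diagonal b * (incM src tgt)ᵀ
          - incM src tgt * Matrix.diagonal (maskOut F b) * (incM src tgt)ᵀ := by
      rw [lap_split src tgt b F]; abel
    rw [h1, Jt_mul, mul_J]
    ext i j
    simp [Matrix.sub_apply, hMdef, hM'def]
  have hMM : M * M⁻¹ = 1 := Matrix.mul_nonsing_inv _ hMdet
  have hM'M : M'⁻¹ * M' = 1 := Matrix.nonsing_inv_mul _ hM'det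
  have hmid : M'⁻¹ * (M - M') * M⁻¹ = M'⁻¹ - M⁻¹ := by
    rw [Matrix.mul_sub, hM'M, Matrix.sub_mul, Matrix.one_mul, Matrix.mul_assoc, hMM,
      Matrix.mul_one]
  have key' : AmFmat src tgt b F * (CFmat src tgt F * BFmat b F * (CFmat src tgt F)ᵀ) *
      Amat src tgt b = AmFmat src tgt b F - Amat src tgt b := by
    rw [hA, hA']
    have e1 : Jmat n * M'⁻¹ * (Jmat n)ᵀ * (CFmat src tgt F * BFmat b F * (CFmat src tgt F)ᵀ) *
        (Jmat n * M⁻¹ * (Jmat n)ᵀ)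
        = Jmat n * M'⁻¹ *
            ((Jmat n)ᵀ * (CFmat src tgt F * BFmat b F * (CFmat src tgt F)ᵀ) * Jmat n) *
            (M⁻¹ * (Jmat n)ᵀ) := by
      simp only [Matrix.mul_assoc]
    rw [e1, hD]
    have e2 : Jmat n * M'⁻¹ * (M - M') * (M⁻¹ * (Jmat n)ᵀ)
        = Jmat n * (M'⁻¹ * (M - M') * M⁻¹) * (Jmat n)ᵀ := by
      simp only [Matrix.mul_assoc]
    rw [e2, hmid, Matrix.mul_sub, Matrix.sub_mul]
  have key : AmFmat src tgt b F * CFmat src tgt F *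
      (1 - BFmat b F * (CFmat src tgt F)ᵀ * Amat src tgt b * CFmat src tgt F)
      = Amat src tgt b * CFmat src tgt F := by
    rw [Matrix.mul_sub, Matrix.mul_one]
    have e3 : AmFmat src tgt b F * CFmat src tgt F *
        (BFmat b F * (CFmat src tgt F)ᵀ * Amat src tgt b * CFmat src tgt F)
        = (AmFmat src tgt b F * (CFmat src tgt F * BFmat b F * (CFmat src tgt F)ᵀ) *
            Amat src tgt b) * CFmat src tgt F := by
      simp only [Matrix.mul_assoc]
    rw [e3, key', Matrix.sub_mul]
    abel
  have hNdet : IsUnit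
      (1 - BFmat b F * (CFmat src tgt F)ᵀ * Amat src tgt b * CFmat src tgt F).det :=
    (Matrix.isUnit_iff_isUnit_det _).mp hinv
  have hNN : (1 - BFmat b F * (CFmat src tgt F)ᵀ * Amat src tgt b * CFmat src tgt F) *
      (1 - BFmat b F * (CFmat src tgt F)ᵀ * Amat src tgt b * CFmat src tgt F)⁻¹ = 1 :=
    Matrix.mul_nonsing_inv _ hNdet
  have hfin : AmFmat src tgt b F * CFmat src tgt F
      = Amat src tgt b * CFmat src tgt F *
        (1 - BFmat b F * (CFmat src tgt F)ᵀ * Amat src tgt b * CFmat src tgt F)⁻¹ := by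
    rw [← key, Matrix.mul_assoc (AmFmat src tgt b F * CFmat src tgt F), hNN, Matrix.mul_one]
  have hfin' : AmFmat src tgt b F * CFmat src tgt F
      = Amat src tgt b * (CFmat src tgt F *
        (1 - BFmat b F * (CFmat src tgt F)ᵀ * Amat src tgt b * CFmat src tgt F)⁻¹) := by
    rw [hfin, Matrix.mul_assoc]
  rw [Matrix.mul_assoc (BmFmat b F * (CmFmat src tgt F)ᵀ), hfin]
  simp only [← Matrix.mul_assoc]
end
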